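/- arXiv:1905.03452 — 2 statements merged into one kernel-verified Lean document; each statement's English description precedes it below -/
import Mathlib

section
/- If (φ₀,φ₁,σ) is a deterrence equilibrium of the stage game Γ(μ) in which Firm 1 is deterred (so α⁻_μ ≥ 1/2), then Firm 0 plays the pure price 2α⁻_μ−1 with probability one, the consumer buys from Firm 0 with probability one, and Firm 0's equilibrium payoff equals 2α⁻_μ−1. Symmetrically, if Firm 0 is deterred (so α⁺_μ ≤ 1/2), then Firm 1 plays the pure price 1−2α⁺_μ with probability one and earns 1−2α⁺_μ. -/
open MeasureTheory Set Filter Topology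
open scoped ENNReal NNReal

noncomputable section

/-- The consumer's possible actions: buy product 0, buy product 1, or exit. -/
inductive CAction : Type
  | buy0 : CAction
  | buy1 : CAction
  | exit : CAction

instance : MeasurableSpace CAction := ⊤

/-- A signal structure `(F₀, F₁, S)`: two mutually absolutely continuous
probability measures on a measurable space `S`. -/
structure SignalStructure (S : Type) [MeasurableSpace S] : Type where
  F0 : Measure S
  F1 : Measure S
  prob0 : IsProbabilityMeasure F0
  prob1 : IsProbabilityMeasure F1
  ac01 : F0 ≪ F1
  ac10 : F1 ≪ F0

namespace SignalStructure

variable {S : Type} [MeasurableSpace S]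

/-- The reference measure `(F₀ + F₁)/2`. -/
def ref (𝒮 : SignalStructure S) : Measure S := (2 : ℝ≥0∞)⁻¹ • (𝒮.F0 + 𝒮.F1)

/-- Radon–Nikodym density of `F₀` with respect to `(F₀+F₁)/2`. -/
def f0 (𝒮 : SignalStructure S) : S → ℝ≥0∞ := 𝒮.F0.rnDeriv 𝒮.ref

/-- Radon–Nikodym density of `F₁` with respect to `(F₀+F₁)/2`. -/
def f1 (𝒮 : SignalStructure S) : S → ℝ≥0∞ := 𝒮.F1.rnDeriv 𝒮.ref

/-- The private belief `p(s) = f₀(s)/(f₀(s)+f₁(s))`. -/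
def p (𝒮 : SignalStructure S) (s : S) : ℝ :=
  (𝒮.f0 s).toReal / ((𝒮.f0 s).toReal + (𝒮.f1 s).toReal)

/-- `G₀(x) = F₀ {s | p(s) < x}`, the CDF of the private belief in state 0. -/
def G0 (𝒮 : SignalStructure S) (x : ℝ) : ℝ := (𝒮.F0 {s | 𝒮.p s < x}).toReal

/-- `G₁(x) = F₁ {s | p(s) < x}`, the CDF of the private belief in state 1. -/
def G1 (𝒮 : SignalStructure S) (x : ℝ) : ℝ := (𝒮.F1 {s | 𝒮.p s < x}).toReal

/-- `α⁻ = inf {x | G(x) > 0}`. -/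
def alphaLo (𝒮 : SignalStructure S) : ℝ := sInf {x | 0 < 𝒮.G0 x}

/-- `α⁺ = sup {x | G(x) < 1}`. -/
def alphaHi (𝒮 : SignalStructure S) : ℝ := sSup {x | 𝒮.G0 x < 1}

/-- Signals are bounded if `α⁻ > 0` and `α⁺ < 1`. -/
def Bounded (𝒮 : SignalStructure S) : Prop := 0 < 𝒮.alphaLo ∧ 𝒮.alphaHi < 1

/-- Signals are unbounded if `α⁻ = 0` and `α⁺ = 1`. -/
def Unbounded (𝒮 : SignalStructure S) : Prop := 𝒮.alphaLo = 0 ∧ 𝒮.alphaHi = 1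

/-- Assumption 1: `G₀, G₁` are differentiable on `(α⁻, α⁺)` with continuous
nonnegative derivatives `g₀, g₁ : [α⁻, α⁺] → ℝ₊`. -/
structure Assumption1 (𝒮 : SignalStructure S) (g0 g1 : ℝ → ℝ) : Prop where
  cont0 : ContinuousOn g0 (Icc 𝒮.alphaLo 𝒮.alphaHi)
  cont1 : ContinuousOn g1 (Icc 𝒮.alphaLo 𝒮.alphaHi)
  nonneg0 : ∀ x ∈ Icc 𝒮.alphaLo 𝒮.alphaHi, 0 ≤ g0 x
  nonneg1 : ∀ x ∈ Icc 𝒮.alphaLo 𝒮.alphaHi, 0 ≤ g1 x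
  hasDeriv0 : ∀ x ∈ Ioo 𝒮.alphaLo 𝒮.alphaHi, HasDerivAt 𝒮.G0 (g0 x) x
  hasDeriv1 : ∀ x ∈ Ioo 𝒮.alphaLo 𝒮.alphaHi, HasDerivAt 𝒮.G1 (g1 x) x

/-- The signal structure exhibits vanishing likelihood: `g₁(α⁻) = g₀(α⁺) = 0`. -/
def VanishingLikelihood (𝒮 : SignalStructure S) (g0 g1 : ℝ → ℝ) : Prop :=
  g1 𝒮.alphaLo = 0 ∧ g0 𝒮.alphaHi = 0

end SignalStructure

/-- Bayesian posterior on state 0 from a prior `μ` and a private belief `q`: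
`p_μ = μ q / (μ q + (1-μ)(1-q))`. -/
def posterior (μ q : ℝ) : ℝ := μ * q / (μ * q + (1 - μ) * (1 - q))

/-- The consumer's expected utility, given posterior `q` on state 0 and prices
`τ₀, τ₁`, from each action. -/
def cUtil (q τ0 τ1 : ℝ) : CAction → ℝ
  | CAction.buy0 => q - τ0
  | CAction.buy1 => (1 - q) - τ1
  | CAction.exit => 0

/-- A consumer pure strategy: maps the posted price pair and the signal to an action. -/
abbrev CStrategy (S : Type) : Type := ℝ → ℝ → S → CAction

/-- A mixed price strategy of a firm: a Borel probability measure on `[0,1]`. -/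
def IsPriceStrategy (φ : Measure ℝ) : Prop :=
  IsProbabilityMeasure φ ∧ φ (Icc (0:ℝ) 1) = 1

namespace SignalStructure

variable {S : Type} [MeasurableSpace S]

/-- The signal distribution under prior `μ`: the mixture `μ F₀ + (1-μ) F₁`. -/
def Fmix (𝒮 : SignalStructure S) (μ : ℝ) : Measure S :=
  ENNReal.ofReal μ • 𝒮.F0 + ENNReal.ofReal (1 - μ) • 𝒮.F1

/-- The probability (under prior `μ`) that the consumer takes action `a` when the
pure prices `τ₀, τ₁` are posted. -/
def actProb (𝒮 : SignalStructure S) (μ : ℝ) (σ : CStrategy S) (τ0 τ1 : ℝ) (a : CAction) : ℝ :=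
  (𝒮.Fmix μ {s | σ τ0 τ1 s = a}).toReal

/-- Firm 0's expected payoff in `Γ(μ)` under mixed strategies `φ₀, φ₁` and consumer
strategy `σ`. -/
def Pi0 (𝒮 : SignalStructure S) (μ : ℝ) (φ0 φ1 : Measure ℝ) (σ : CStrategy S) : ℝ :=
  ∫ τ, 𝒮.actProb μ σ τ.1 τ.2 CAction.buy0 * τ.1 ∂(φ0.prod φ1)

/-- Firm 1's expected payoff in `Γ(μ)`. -/
def Pi1 (𝒮 : SignalStructure S) (μ : ℝ) (φ0 φ1 : Measure ℝ) (σ : CStrategy S) : ℝ :=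
  ∫ τ, 𝒮.actProb μ σ τ.1 τ.2 CAction.buy1 * τ.2 ∂(φ0.prod φ1)

/-- The probability that the consumer takes action `a` under mixed price strategies. -/
def actProbMix (𝒮 : SignalStructure S) (μ : ℝ) (φ0 φ1 : Measure ℝ) (σ : CStrategy S)
    (a : CAction) : ℝ :=
  ∫ τ, 𝒮.actProb μ σ τ.1 τ.2 a ∂(φ0.prod φ1)

/-- A subgame perfect equilibrium of the stage game `Γ(μ)`: the consumer strategy is a
best reply to every price pair, and each firm's mixed price strategy maximizes its
expected payoff given the opponent's strategy and the consumer's strategy. -/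
structure IsSPE (𝒮 : SignalStructure S) (μ : ℝ) (φ0 φ1 : Measure ℝ) (σ : CStrategy S) :
    Prop where
  strat0 : IsPriceStrategy φ0
  strat1 : IsPriceStrategy φ1
  meas : ∀ τ0 τ1, Measurable (σ τ0 τ1)
  consumerBR : ∀ τ0 ∈ Icc (0:ℝ) 1, ∀ τ1 ∈ Icc (0:ℝ) 1,
    ∀ᵐ s ∂(𝒮.Fmix μ), ∀ a : CAction,
      cUtil (posterior μ (𝒮.p s)) τ0 τ1 a ≤ cUtil (posterior μ (𝒮.p s)) τ0 τ1 (σ τ0 τ1 s)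
  firm0opt : ∀ ψ : Measure ℝ, IsPriceStrategy ψ → 𝒮.Pi0 μ ψ φ1 σ ≤ 𝒮.Pi0 μ φ0 φ1 σ
  firm1opt : ∀ ψ : Measure ℝ, IsPriceStrategy ψ → 𝒮.Pi1 μ φ0 ψ σ ≤ 𝒮.Pi1 μ φ0 φ1 σ

/-- A deterrence equilibrium: an SPE in which some firm sells with probability zero. -/
def IsDeterrence (𝒮 : SignalStructure S) (μ : ℝ) (φ0 φ1 : Measure ℝ) (σ : CStrategy S) :
    Prop :=
  𝒮.IsSPE μ φ0 φ1 σ ∧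
    (𝒮.actProbMix μ φ0 φ1 σ CAction.buy0 = 0 ∨ 𝒮.actProbMix μ φ0 φ1 σ CAction.buy1 = 0)

/-- The market is full at `(μ, σ, τ₀, τ₁)` if the consumer exits with probability zero. -/
def MarketFull (𝒮 : SignalStructure S) (μ : ℝ) (σ : CStrategy S) (τ0 τ1 : ℝ) : Prop :=
  𝒮.Fmix μ {s | σ τ0 τ1 s = CAction.exit} = 0

open scoped Classical in
/-- The consumer's best-reply threshold `v_μ(τ₀,τ₁)` on the private belief. -/
def v (𝒮 : SignalStructure S) (μ : ℝ) (σ : CStrategy S) (τ0 τ1 : ℝ) : ℝ :=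
  if 𝒮.MarketFull μ σ τ0 τ1 then
    (1 - μ) * (1 + τ0 - τ1) / (2 * μ - (2 * μ - 1) * (1 + τ0 - τ1))
  else (1 - μ) * τ0 / (μ - (2 * μ - 1) * τ0)

end SignalStructure


/-! ### Auxiliary lemmas -/

section AuxHelpers

open MeasureTheory

lemma aux_countable_atoms {S : Type} [MeasurableSpace S] (ν : Measure S) [IsFiniteMeasure ν]
    (Q : S → ℝ) (hQ : Measurable Q) :
    Set.Countable {a : ℝ | 0 < ν {s | Q s = a}} := by
  refine MeasureTheory.Measure.countable_meas_pos_of_disjoint_iUnion₀ (μ := ν)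
    (As := fun a : ℝ => {s | Q s = a}) (fun a => ?_) (fun a b hab => ?_)
  · exact (hQ (measurableSet_singleton a)).nullMeasurableSet
  · refine Disjoint.aedisjoint ?_
    simp only [Function.onFun, Set.disjoint_left]
    intro s hsa hsb
    exact hab (by rw [← hsa, ← hsb])

lemma aux_eq_dirac {φ : Measure ℝ} (hu : φ Set.univ = 1) {x : ℝ} (hx : φ {x} = 1) :
    φ = Measure.dirac x := by
  have hc : φ {x}ᶜ = 0 := by
    have h := measure_add_measure_compl (μ := φ) (measurableSet_singleton x)
    rw [hx, hu] at h
    have : (1 : ℝ≥0∞) + φ {x}ᶜ = 1 + 0 := by simpa using h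
    exact (ENNReal.add_right_inj ENNReal.one_ne_top).mp this
  ext A hA
  by_cases hm : x ∈ A
  · rw [Measure.dirac_apply' _ hA, Set.indicator_of_mem hm]
    refine le_antisymm (le_trans (measure_mono (Set.subset_univ A)) (le_of_eq hu)) ?_
    calc (1:ℝ≥0∞) = φ {x} := hx.symm
    _ ≤ φ A := measure_mono (Set.singleton_subset_iff.mpr hm)
  · rw [Measure.dirac_apply' _ hA, Set.indicator_of_notMem hm]
    exact measure_mono_null (fun y hy => fun (h : y = x) => hm (h ▸ hy)) hc

lemma aux_dirac_price {x : ℝ} (hx : x ∈ Set.Icc (0:ℝ) 1) :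
    IsPriceStrategy (Measure.dirac x) := by
  refine ⟨inferInstance, ?_⟩
  rw [Measure.dirac_apply' _ measurableSet_Icc, Set.indicator_of_mem hx]
  rfl

lemma aux_compl_Icc_null {φ : Measure ℝ} (hu : φ Set.univ = 1)
    (hI : φ (Set.Icc (0:ℝ) 1) = 1) : φ (Set.Icc (0:ℝ) 1)ᶜ = 0 := by
  have h := measure_add_measure_compl (μ := φ) (measurableSet_Icc (a := (0:ℝ)) (b := 1))
  rw [hI, hu] at h
  have : (1 : ℝ≥0∞) + φ (Set.Icc (0:ℝ) 1)ᶜ = 1 + 0 := by simpa using h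
  exact (ENNReal.add_right_inj ENNReal.one_ne_top).mp this

lemma aux_ae_Icc {φ : Measure ℝ} (hu : φ Set.univ = 1)
    (hI : φ (Set.Icc (0:ℝ) 1) = 1) : ∀ᵐ x ∂φ, x ∈ Set.Icc (0:ℝ) 1 := by
  rw [MeasureTheory.ae_iff]
  exact aux_compl_Icc_null hu hI

lemma aux_aesm_of_countable {φ : Measure ℝ} (hu : φ Set.univ = 1)
    (hI : φ (Set.Icc (0:ℝ) 1) = 1)
    {f g : ℝ → ℝ} {B : Set ℝ} (hB : B.Countable) (hg : Measurable g)
    (hfg : ∀ x ∈ Set.Icc (0:ℝ) 1, x ∉ B → f x = g x) :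
    AEStronglyMeasurable f φ := by
  classical
  refine ⟨B.piecewise f g, ?_, ?_⟩
  · refine Measurable.stronglyMeasurable ?_
    refine hg.measurable_of_countable_ne (hB.mono ?_)
    intro x hx
    by_contra hxB
    exact hx (by simp [Set.piecewise_eq_of_notMem _ _ _ hxB])
  · refine measure_mono_null (fun x hx => ?_) (aux_compl_Icc_null hu hI)
    simp only [Set.mem_compl_iff, Set.mem_setOf_eq] at hx
    intro hxI
    by_cases hxB : x ∈ B
    · exact hx (Set.piecewise_eq_of_mem _ _ _ hxB).symm
    · exact hx (by rw [Set.piecewise_eq_of_notMem _ _ _ hxB]; exact hfg x hxI hxB)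

lemma aux_exists_notin {ε : ℝ} (hε : 0 < ε) {B : Set ℝ} (hB : B.Countable) :
    ∃ x, x ∈ Set.Ioo (0:ℝ) ε ∧ x ∉ B := by
  by_contra h
  push_neg at h
  have hsub : Set.Ioo (0:ℝ) ε ⊆ B := fun x hx => h x hx
  have h1 : (volume : Measure ℝ) (Set.Ioo (0:ℝ) ε) = 0 :=
    measure_mono_null hsub (hB.measure_zero _)
  rw [Real.volume_Ioo] at h1
  simp only [ENNReal.ofReal_eq_zero, sub_zero] at h1
  linarith

end AuxHelpers

section CoreLemma

open MeasureTheory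

variable {S : Type} [MeasurableSpace S]

set_option maxHeartbeats 2000000 in
/-- Core analysis of a deterrence equilibrium, stated abstractly. -/
lemma core_deterrence
    (ν : Measure S) [IsProbabilityMeasure ν]
    (Q : S → ℝ) (hQmeas : Measurable Q)
    (m : ℝ) (hm1 : m < 1)
    (hQm : ∀ᵐ s ∂ν, m ≤ Q s)
    (hpos : ∀ u, m < u → 0 < ν {s | Q s < u})
    (φ0 φ1 : Measure ℝ) (hφ0 : IsPriceStrategy φ0) (hφ1 : IsPriceStrategy φ1)
    (A : ℝ → ℝ → S → CAction) (hAmeas : ∀ τ0 τ1, Measurable (A τ0 τ1))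
    (hBR : ∀ τ0 ∈ Set.Icc (0:ℝ) 1, ∀ τ1 ∈ Set.Icc (0:ℝ) 1, ∀ᵐ s ∂ν, ∀ a : CAction,
      cUtil (Q s) τ0 τ1 a ≤ cUtil (Q s) τ0 τ1 (A τ0 τ1 s))
    (hf0opt : ∀ ψ : Measure ℝ, IsPriceStrategy ψ →
      (∫ τ, (ν {s | A τ.1 τ.2 s = CAction.buy0}).toReal * τ.1 ∂(ψ.prod φ1)) ≤
      ∫ τ, (ν {s | A τ.1 τ.2 s = CAction.buy0}).toReal * τ.1 ∂(φ0.prod φ1))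
    (hf1opt : ∀ ψ : Measure ℝ, IsPriceStrategy ψ →
      (∫ τ, (ν {s | A τ.1 τ.2 s = CAction.buy1}).toReal * τ.2 ∂(φ0.prod ψ)) ≤
      ∫ τ, (ν {s | A τ.1 τ.2 s = CAction.buy1}).toReal * τ.2 ∂(φ0.prod φ1))
    (H1 : (∫ τ, (ν {s | A τ.1 τ.2 s = CAction.buy1}).toReal ∂(φ0.prod φ1)) = 0) :
    φ0 {2*m - 1} = 1 ∧
    (∫ τ, (ν {s | A τ.1 τ.2 s = CAction.buy0}).toReal ∂(φ0.prod φ1)) = 1 ∧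
    (∫ τ, (ν {s | A τ.1 τ.2 s = CAction.buy0}).toReal * τ.1 ∂(φ0.prod φ1)) = 2*m - 1 := by
  classical
  haveI hP0 : IsProbabilityMeasure φ0 := hφ0.1
  haveI hP1 : IsProbabilityMeasure φ1 := hφ1.1
  set t : ℝ := 2*m - 1 with ht_def
  have ht1 : t < 1 := by simp only [ht_def]; linarith
  have hmt : t < m := by simp only [ht_def]; linarith
  -- price probabilities
  set f1p : ℝ → ℝ → ℝ := fun τ0 τ1 => (ν {s | A τ0 τ1 s = CAction.buy1}).toReal with hf1p_def
  set f0p : ℝ → ℝ → ℝ := fun τ0 τ1 => (ν {s | A τ0 τ1 s = CAction.buy0}).toReal with hf0p_def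
  have hf1p_nonneg : ∀ τ0 τ1, 0 ≤ f1p τ0 τ1 := fun _ _ => ENNReal.toReal_nonneg
  have hf0p_nonneg : ∀ τ0 τ1, 0 ≤ f0p τ0 τ1 := fun _ _ => ENNReal.toReal_nonneg
  have hmeas_le_one : ∀ B : Set S, (ν B).toReal ≤ 1 := by
    intro B
    rw [show (1:ℝ) = (ν Set.univ).toReal by simp]
    exact ENNReal.toReal_mono (measure_ne_top ν _) (measure_mono (Set.subset_univ B))
  have hf1p_le_one : ∀ τ0 τ1, f1p τ0 τ1 ≤ 1 := fun τ0 τ1 => hmeas_le_one _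
  have hf0p_le_one : ∀ τ0 τ1, f0p τ0 τ1 ≤ 1 := fun τ0 τ1 => hmeas_le_one _
  have hae0 : ∀ᵐ x ∂φ0, x ∈ Set.Icc (0:ℝ) 1 := aux_ae_Icc (measure_univ) hφ0.2
  have hae1 : ∀ᵐ x ∂φ1, x ∈ Set.Icc (0:ℝ) 1 := aux_ae_Icc (measure_univ) hφ1.2
  have haeprod : ∀ᵐ τ ∂(φ0.prod φ1), τ.1 ∈ Set.Icc (0:ℝ) 1 ∧ τ.2 ∈ Set.Icc (0:ℝ) 1 := by
    rw [MeasureTheory.ae_iff]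
    refine measure_mono_null (fun τ hτ => ?_)
      (?_ : φ0.prod φ1 ((Set.Icc (0:ℝ) 1)ᶜ ×ˢ Set.univ ∪ Set.univ ×ˢ (Set.Icc (0:ℝ) 1)ᶜ) = 0)
    · simp only [Set.mem_setOf_eq, not_and_or] at hτ
      rcases hτ with h | h
      · exact Set.mem_union_left _ ⟨h, Set.mem_univ _⟩
      · exact Set.mem_union_right _ ⟨Set.mem_univ _, h⟩
    · refine measure_union_null ?_ ?_ <;>
        rw [Measure.prod_prod] <;>
        simp [aux_compl_Icc_null (measure_univ) hφ0.2, aux_compl_Icc_null (measure_univ) hφ1.2]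
  -- the atom set of Q
  set D : Set ℝ := {a : ℝ | 0 < ν {s | Q s = a}} with hD_def
  have hDcount : D.Countable := aux_countable_atoms ν Q hQmeas
  have hnotD : ∀ a, a ∉ D → ν {s | Q s = a} = 0 := by
    intro a ha
    by_contra h
    exact ha (pos_iff_ne_zero.mpr h)
  -- the cdf of Q
  set H : ℝ → ℝ := fun x => (ν {s | Q s < x}).toReal with hH_def
  have hHmeas : Measurable H := by
    refine Monotone.measurable (fun a b hab => ?_)
    exact ENNReal.toReal_mono (measure_ne_top ν _)
      (measure_mono (fun s hs => lt_of_lt_of_le hs hab))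
  -- Best-reply consequences for buying from firm 1
  have hBR1 : ∀ τ0 ∈ Set.Icc (0:ℝ) 1, ∀ τ1 ∈ Set.Icc (0:ℝ) 1,
      ∀ᵐ s ∂ν, (Q s < min ((1+τ0-τ1)/2) (1-τ1) → A τ0 τ1 s = CAction.buy1) ∧
        (A τ0 τ1 s = CAction.buy1 → Q s ≤ min ((1+τ0-τ1)/2) (1-τ1)) := by
    intro τ0 h0 τ1 h1
    filter_upwards [hBR τ0 h0 τ1 h1] with s hs
    constructor
    · intro hQs
      have h1s := hs CAction.buy1
      rcases lt_min_iff.mp hQs with ⟨ha, hb⟩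
      cases hA : A τ0 τ1 s
      case buy1 => rfl
      case buy0 => rw [hA] at h1s; simp only [cUtil] at h1s; linarith
      case exit => rw [hA] at h1s; simp only [cUtil] at h1s; linarith
    · intro hA
      have h0s := hs CAction.buy0
      have hes := hs CAction.exit
      rw [hA] at h0s hes
      simp only [cUtil] at h0s hes
      exact le_min (by linarith) (by linarith)
  have hsand : ∀ τ0 ∈ Set.Icc (0:ℝ) 1, ∀ τ1 ∈ Set.Icc (0:ℝ) 1,
      ν {s | Q s < min ((1+τ0-τ1)/2) (1-τ1)} ≤ ν {s | A τ0 τ1 s = CAction.buy1} ∧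
      ν {s | A τ0 τ1 s = CAction.buy1} ≤ ν {s | Q s ≤ min ((1+τ0-τ1)/2) (1-τ1)} := by
    intro τ0 h0 τ1 h1
    constructor
    · refine measure_mono_ae ?_
      filter_upwards [hBR1 τ0 h0 τ1 h1] with s hs hlt using hs.1 hlt
    · refine measure_mono_ae ?_
      filter_upwards [hBR1 τ0 h0 τ1 h1] with s hs hA using hs.2 hA
  have hf1p_eq : ∀ τ0 ∈ Set.Icc (0:ℝ) 1, ∀ τ1 ∈ Set.Icc (0:ℝ) 1,
      ν {s | Q s = min ((1+τ0-τ1)/2) (1-τ1)} = 0 →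
      f1p τ0 τ1 = H (min ((1+τ0-τ1)/2) (1-τ1)) := by
    intro τ0 h0 τ1 h1 hnull
    obtain ⟨hlo, hhi⟩ := hsand τ0 h0 τ1 h1
    have hsplit : ν {s | Q s ≤ min ((1+τ0-τ1)/2) (1-τ1)} ≤
        ν {s | Q s < min ((1+τ0-τ1)/2) (1-τ1)} := by
      calc ν {s | Q s ≤ min ((1+τ0-τ1)/2) (1-τ1)}
          ≤ ν ({s | Q s < min ((1+τ0-τ1)/2) (1-τ1)} ∪
              {s | Q s = min ((1+τ0-τ1)/2) (1-τ1)}) :=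
            measure_mono (fun s hs => by
              have hs' : Q s ≤ min ((1+τ0-τ1)/2) (1-τ1) := hs
              rcases lt_or_eq_of_le hs' with h | h
              · exact Or.inl h
              · exact Or.inr h)
        _ ≤ ν {s | Q s < min ((1+τ0-τ1)/2) (1-τ1)} +
              ν {s | Q s = min ((1+τ0-τ1)/2) (1-τ1)} := measure_union_le _ _
        _ = ν {s | Q s < min ((1+τ0-τ1)/2) (1-τ1)} := by rw [hnull, add_zero]
    have : ν {s | A τ0 τ1 s = CAction.buy1} = ν {s | Q s < min ((1+τ0-τ1)/2) (1-τ1)} :=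
      le_antisymm (le_trans hhi hsplit) hlo
    simp only [hf1p_def, hH_def, this]
  -- Best-reply consequence for buying from firm 0
  have hBR0 : ∀ τ0 ∈ Set.Icc (0:ℝ) 1, ∀ τ1 ∈ Set.Icc (0:ℝ) 1,
      ∀ᵐ s ∂ν, (max ((1+τ0-τ1)/2) τ0 < Q s → A τ0 τ1 s = CAction.buy0) := by
    intro τ0 h0 τ1 h1
    filter_upwards [hBR τ0 h0 τ1 h1] with s hs hQs
    rcases max_lt_iff.mp hQs with ⟨ha, hb⟩
    have h0s := hs CAction.buy0
    cases hA : A τ0 τ1 s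
    case buy0 => rfl
    case buy1 => rw [hA] at h0s; simp only [cUtil] at h0s; linarith
    case exit => rw [hA] at h0s; simp only [cUtil] at h0s; linarith
  -- a.e.-measurability of the deterred firm's sale probability in its own price
  have haesm1 : ∀ τ1 ∈ Set.Icc (0:ℝ) 1, (0 < ν {s | Q s = 1 - τ1} → τ1 ≤ 0) →
      AEStronglyMeasurable (fun τ0 => f1p τ0 τ1) φ0 := by
    intro τ1 h1 hτ1
    have hBcount : ({τ0 : ℝ | (1+τ0-τ1)/2 ∈ D} ∪ {1} : Set ℝ).Countable := by
      refine Set.Countable.union ?_ (Set.countable_singleton 1)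
      have : {τ0 : ℝ | (1+τ0-τ1)/2 ∈ D} = (fun τ0 : ℝ => (1+τ0-τ1)/2) ⁻¹' D := rfl
      rw [this]
      refine hDcount.preimage (f := fun τ0 : ℝ => (1+τ0-τ1)/2) ?_
      intro a b hab
      dsimp at hab; linarith
    refine aux_aesm_of_countable measure_univ hφ0.2
      (g := fun τ0 : ℝ => H (min ((1+τ0-τ1)/2) (1-τ1))) hBcount
      (hHmeas.comp ((((measurable_const.add measurable_id).sub
        measurable_const).div_const 2).min measurable_const)) ?_
    intro τ0 h0 hτ0B
    simp only [Set.mem_union, Set.mem_singleton_iff, Set.mem_setOf_eq, not_or] at hτ0B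
    obtain ⟨hnotD', hne1⟩ := hτ0B
    refine hf1p_eq τ0 h0 τ1 h1 ?_
    rcases min_cases ((1+τ0-τ1)/2) (1-τ1) with ⟨heq, _⟩ | ⟨heq, hlt⟩
    · rw [heq]; exact hnotD _ hnotD'
    · rw [heq]
      by_contra hposatom
      have hpos' : 0 < ν {s | Q s = 1 - τ1} := pos_iff_ne_zero.mpr hposatom
      have hτ10 : τ1 ≤ 0 := hτ1 hpos'
      have hτ1eq : τ1 = 0 := le_antisymm hτ10 h1.1
      rw [hτ1eq] at hlt
      have : τ0 > 1 := by linarith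
      exact absurd h0.2 (not_le.mpr this)
  -- The deterred firm's equilibrium payoff is zero
  have hPi1eq : (∫ τ, f1p τ.1 τ.2 * τ.2 ∂(φ0.prod φ1)) = 0 := by
    by_cases hk : Integrable (fun τ : ℝ × ℝ => f1p τ.1 τ.2 * τ.2) (φ0.prod φ1)
    swap
    · exact integral_undef hk
    obtain ⟨g0, hg0m, hg0e⟩ := haesm1 0 ⟨le_refl 0, zero_le_one⟩ (fun _ => le_refl 0)
    obtain ⟨k', hk'm, hk'e⟩ := hk.1
    set Fhat : ℝ × ℝ → ℝ := fun τ => if τ.2 = 0 then g0 τ.1 else k' τ / τ.2 with hFhat_def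
    have hFhatm : Measurable Fhat := by
      refine Measurable.ite (measurable_snd (measurableSet_singleton (0:ℝ))) ?_ ?_
      · exact hg0m.measurable.comp measurable_fst
      · exact hk'm.measurable.div measurable_snd
    have hae_eq : (fun τ : ℝ × ℝ => f1p τ.1 τ.2) =ᵐ[φ0.prod φ1] Fhat := by
      have hbad1 : φ0 {τ0 : ℝ | ¬ f1p τ0 0 = g0 τ0} = 0 := MeasureTheory.ae_iff.mp hg0e
      have hbad2 : (φ0.prod φ1) {τ : ℝ × ℝ | ¬ f1p τ.1 τ.2 * τ.2 = k' τ} = 0 :=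
        MeasureTheory.ae_iff.mp hk'e
      rw [Filter.EventuallyEq, MeasureTheory.ae_iff]
      refine measure_mono_null (t := ({τ0 : ℝ | ¬ f1p τ0 0 = g0 τ0} ×ˢ Set.univ) ∪
        {τ : ℝ × ℝ | ¬ f1p τ.1 τ.2 * τ.2 = k' τ}) (fun τ hτ => ?_) (measure_union_null ?_ hbad2)
      · simp only [Set.mem_setOf_eq] at hτ
        by_cases h2 : τ.2 = 0
        · refine Set.mem_union_left _ ⟨?_, Set.mem_univ _⟩
          simp only [Set.mem_setOf_eq]
          intro heq
          apply hτ
          have hfh : Fhat τ = g0 τ.1 := if_pos h2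
          rw [hfh, h2]
          exact heq
        · refine Set.mem_union_right _ ?_
          simp only [Set.mem_setOf_eq]
          intro heq
          apply hτ
          have hfh : Fhat τ = k' τ / τ.2 := if_neg h2
          rw [hfh, ← heq]
          field_simp
      · rw [Measure.prod_prod, hbad1, zero_mul]
    have hF1aesm : AEStronglyMeasurable (fun τ : ℝ × ℝ => f1p τ.1 τ.2) (φ0.prod φ1) :=
      ⟨Fhat, hFhatm.stronglyMeasurable, hae_eq⟩
    have hF1int : Integrable (fun τ : ℝ × ℝ => f1p τ.1 τ.2) (φ0.prod φ1) := by
      refine Integrable.mono' (integrable_const 1) hF1aesm ?_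
      filter_upwards with τ
      rw [Real.norm_eq_abs, abs_of_nonneg (hf1p_nonneg _ _)]
      exact hf1p_le_one _ _
    have hzero : (fun τ : ℝ × ℝ => f1p τ.1 τ.2) =ᵐ[φ0.prod φ1] 0 :=
      (integral_eq_zero_iff_of_nonneg_ae
        (Filter.Eventually.of_forall (fun τ => hf1p_nonneg _ _)) hF1int).mp H1
    have : (fun τ : ℝ × ℝ => f1p τ.1 τ.2 * τ.2) =ᵐ[φ0.prod φ1] 0 := by
      filter_upwards [hzero] with τ h
      simp only [Pi.zero_apply] at h ⊢
      rw [h, zero_mul]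
    rw [integral_congr_ae this]
    simp
  -- Firm 0 never prices above t (else firm 1 would deviate profitably)
  have hmass : ∀ δ : ℝ, 0 < δ → φ0 (Set.Ioc (t+δ) 1) = 0 := by
    intro δ hδ
    by_contra hne
    have hεpos : 0 < φ0 (Set.Ioc (t+δ) 1) := pos_iff_ne_zero.mpr hne
    have hε'pos : (0:ℝ) < min δ (min (1-m) 1) := lt_min hδ (lt_min (by linarith) one_pos)
    obtain ⟨τ1', hτ1'mem, hτ1'good⟩ := aux_exists_notin hε'pos
      (B := (fun τ1 : ℝ => 1 - τ1) ⁻¹' D)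
      (hDcount.preimage (fun a b hab => by
        have : 1 - a = 1 - b := hab
        linarith))
    obtain ⟨hτ1'pos, hτ1'lt⟩ := hτ1'mem
    have hτ1'le1 : τ1' ≤ 1 :=
      le_of_lt (lt_of_lt_of_le hτ1'lt (le_trans (min_le_right _ _) (min_le_right _ _)))
    have hτ1'ltδ : τ1' < δ := lt_of_lt_of_le hτ1'lt (min_le_left _ _)
    have hτ1'lt1m : τ1' < 1 - m :=
      lt_of_lt_of_le hτ1'lt (le_trans (min_le_right _ _) (min_le_left _ _))
    have hγpos : (0:ℝ) < min (δ - τ1') (1 - m - τ1') := lt_min (by linarith) (by linarith)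
    set γ : ℝ := min (δ - τ1') (1 - m - τ1') with hγ_def
    set u : ℝ := m + γ/2 with hu_def
    have hmu : m < u := by simp only [hu_def]; linarith
    have hcpos : 0 < ν {s | Q s < u} := hpos u hmu
    have hlow : ∀ τ0 ∈ Set.Icc (0:ℝ) 1, τ0 ∈ Set.Ioc (t+δ) 1 →
        ν {s | Q s < u} ≤ ν {s | A τ0 τ1' s = CAction.buy1} := by
      intro τ0 h0 hτ0
      refine le_trans ?_ ((hsand τ0 h0 τ1' ⟨le_of_lt hτ1'pos, hτ1'le1⟩).1)
      refine measure_mono (fun s hs => ?_)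
      simp only [Set.mem_setOf_eq] at hs ⊢
      have h2 : t + δ < τ0 := hτ0.1
      refine lt_min ?_ ?_
      · have h1 : γ ≤ δ - τ1' := min_le_left _ _
        have hts : t = 2*m - 1 := ht_def
        calc Q s < u := hs
          _ ≤ (1+τ0-τ1')/2 := by rw [hu_def]; rw [hts] at h2; linarith
      · have h1 : γ ≤ 1 - m - τ1' := min_le_right _ _
        calc Q s < u := hs
          _ ≤ 1 - τ1' := by rw [hu_def]; linarith
    have hPS : IsPriceStrategy (Measure.dirac τ1') := aux_dirac_price ⟨le_of_lt hτ1'pos, hτ1'le1⟩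
    have hdev := hf1opt (Measure.dirac τ1') hPS
    rw [Measure.prod_dirac] at hdev
    have hemb : MeasurableEmbedding (fun x : ℝ => (x, τ1')) :=
      MeasurableEmbedding.id.prodMk_right τ1'
    rw [hemb.integral_map] at hdev
    rw [hPi1eq] at hdev
    have hdev' : (∫ τ0, f1p τ0 τ1' * τ1' ∂φ0) ≤ 0 := hdev
    have haesm' : AEStronglyMeasurable (fun τ0 => f1p τ0 τ1' * τ1') φ0 := by
      refine AEStronglyMeasurable.mul_const ?_ τ1'
      refine haesm1 τ1' ⟨le_of_lt hτ1'pos, hτ1'le1⟩ (fun hQa => absurd hQa hτ1'good)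
    have hint : Integrable (fun τ0 => f1p τ0 τ1' * τ1') φ0 := by
      refine Integrable.mono' (integrable_const 1) haesm' ?_
      filter_upwards with τ0
      rw [Real.norm_eq_abs, abs_of_nonneg (mul_nonneg (hf1p_nonneg _ _) (le_of_lt hτ1'pos))]
      calc f1p τ0 τ1' * τ1' ≤ 1 * 1 :=
            mul_le_mul (hf1p_le_one _ _) hτ1'le1 (le_of_lt hτ1'pos) zero_le_one
        _ = 1 := mul_one 1
    have hℓint : Integrable ((Set.Ioc (t+δ) 1).indicator
        (fun _ : ℝ => (ν {s | Q s < u}).toReal * τ1')) φ0 :=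
      (integrable_const _).indicator measurableSet_Ioc
    have hle : (Set.Ioc (t+δ) 1).indicator (fun _ : ℝ => (ν {s | Q s < u}).toReal * τ1')
        ≤ᵐ[φ0] fun τ0 => f1p τ0 τ1' * τ1' := by
      filter_upwards [hae0] with τ0 hτ0I
      by_cases hin : τ0 ∈ Set.Ioc (t+δ) 1
      · rw [Set.indicator_of_mem hin]
        refine mul_le_mul_of_nonneg_right ?_ (le_of_lt hτ1'pos)
        exact ENNReal.toReal_mono (measure_ne_top ν _) (hlow τ0 hτ0I hin)
      · rw [Set.indicator_of_notMem hin]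
        exact mul_nonneg (hf1p_nonneg _ _) (le_of_lt hτ1'pos)
    have hlb : (ν {s | Q s < u}).toReal * τ1' * (φ0 (Set.Ioc (t+δ) 1)).toReal
        ≤ ∫ τ0, f1p τ0 τ1' * τ1' ∂φ0 := by
      rw [show (ν {s | Q s < u}).toReal * τ1' * (φ0 (Set.Ioc (t+δ) 1)).toReal
          = ∫ τ0, (Set.Ioc (t+δ) 1).indicator
              (fun _ : ℝ => (ν {s | Q s < u}).toReal * τ1') τ0 ∂φ0 by
        rw [integral_indicator measurableSet_Ioc, setIntegral_const, smul_eq_mul, measureReal_def]; ring]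
      exact integral_mono_ae hℓint hint hle
    have hposdev : 0 < ∫ τ0, f1p τ0 τ1' * τ1' ∂φ0 := by
      refine lt_of_lt_of_le ?_ hlb
      refine mul_pos (mul_pos ?_ hτ1'pos) ?_
      · exact ENNReal.toReal_pos (ne_of_gt hcpos) (measure_ne_top ν _)
      · exact ENNReal.toReal_pos hne (measure_ne_top φ0 _)
    linarith
  -- t must be nonnegative
  by_cases ht0 : 0 ≤ t
  swap
  · exfalso
    push_neg at ht0
    have h1 := hmass (-t/2) (by linarith)
    have hsub : Set.Icc (0:ℝ) 1 ⊆ Set.Ioc (t + -t/2) 1 :=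
      fun x hx => ⟨by linarith [hx.1], hx.2⟩
    have h2 : φ0 (Set.Icc (0:ℝ) 1) = 0 := measure_mono_null hsub h1
    rw [hφ0.2] at h2
    exact one_ne_zero h2
  -- φ0 is supported on [0, t]
  have hIoc_t : φ0 (Set.Ioc t 1) = 0 := by
    have heq : Set.Ioc t 1 = ⋃ n : ℕ, Set.Ioc (t + 1/(n+1)) 1 := by
      ext x
      simp only [Set.mem_Ioc, Set.mem_iUnion]
      constructor
      · rintro ⟨hx1, hx2⟩
        obtain ⟨n, hn⟩ := exists_nat_one_div_lt (by linarith : (0:ℝ) < x - t)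
        exact ⟨n, by linarith, hx2⟩
      · rintro ⟨n, hn1, hn2⟩
        have hp : (0:ℝ) < 1/(n+1) := by positivity
        exact ⟨by linarith, hn2⟩
    rw [heq]
    exact measure_iUnion_null (fun n => hmass (1/(n+1)) (by positivity))
  have hIcc_t : φ0 (Set.Icc 0 t) = 1 := by
    have hsub : Set.Icc (0:ℝ) 1 ⊆ Set.Icc 0 t ∪ Set.Ioc t 1 := by
      intro x hx
      by_cases hxt : x ≤ t
      · exact Or.inl ⟨hx.1, hxt⟩
      · exact Or.inr ⟨not_le.mp hxt, hx.2⟩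
    refine le_antisymm ?_ ?_
    · rw [show (1:ℝ≥0∞) = φ0 Set.univ from measure_univ.symm]
      exact measure_mono (Set.subset_univ _)
    · calc (1:ℝ≥0∞) = φ0 (Set.Icc 0 1) := hφ0.2.symm
        _ ≤ φ0 (Set.Icc 0 t ∪ Set.Ioc t 1) := measure_mono hsub
        _ ≤ φ0 (Set.Icc 0 t) + φ0 (Set.Ioc t 1) := measure_union_le _ _
        _ = φ0 (Set.Icc 0 t) := by rw [hIoc_t, add_zero]
  have hae_t : ∀ᵐ τ0 ∂φ0, τ0 ∈ Set.Icc 0 t := by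
    rw [MeasureTheory.ae_iff]
    have hc := measure_add_measure_compl (μ := φ0) (measurableSet_Icc (a := (0:ℝ)) (b := t))
    rw [hIcc_t, measure_univ] at hc
    have : (1:ℝ≥0∞) + φ0 (Set.Icc (0:ℝ) t)ᶜ = 1 + 0 := by simpa using hc
    exact (ENNReal.add_right_inj ENNReal.one_ne_top).mp this
  -- Step A : firm 0 can secure any payoff below t
  have hstepA : ∀ t' : ℝ, 0 ≤ t' → t' < t →
      t' ≤ ∫ τ, f0p τ.1 τ.2 * τ.1 ∂(φ0.prod φ1) := by
    intro t' ht'0 ht'lt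
    have ht'le1 : t' ≤ 1 := le_of_lt (lt_trans ht'lt ht1)
    have hPS : IsPriceStrategy (Measure.dirac t') := aux_dirac_price ⟨ht'0, ht'le1⟩
    have hdev := hf0opt (Measure.dirac t') hPS
    rw [Measure.dirac_prod, (measurableEmbedding_prodMk_left t').integral_map] at hdev
    have hdev' : (∫ τ1, f0p t' τ1 * t' ∂φ1) ≤ ∫ τ, f0p τ.1 τ.2 * τ.1 ∂(φ0.prod φ1) := hdev
    have heq : (fun τ1 : ℝ => f0p t' τ1 * t') =ᵐ[φ1] fun _ => t' := by
      filter_upwards [hae1] with τ1 h1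
      have hone : ν {s | A t' τ1 s = CAction.buy0} = 1 := by
        have hcompl : ν {s | A t' τ1 s = CAction.buy0}ᶜ = 0 := by
          have hmain : ∀ᵐ s ∂ν, A t' τ1 s = CAction.buy0 := by
            filter_upwards [hBR0 t' ⟨ht'0, ht'le1⟩ τ1 h1, hQm] with s hs hQs
            refine hs (max_lt ?_ ?_)
            · have := h1.1
              have hts : t = 2*m-1 := ht_def
              rw [hts] at ht'lt
              linarith
            · linarith [hmt]
          exact MeasureTheory.ae_iff.mp hmain
        have hms : MeasurableSet {s | A t' τ1 s = CAction.buy0} :=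
          (hAmeas t' τ1) (MeasurableSpace.measurableSet_top (s := {CAction.buy0}))
        have hadd := measure_add_measure_compl (μ := ν) hms
        rw [hcompl, add_zero, measure_univ] at hadd
        exact hadd
      have : f0p t' τ1 = 1 := by
        simp only [hf0p_def, hone, ENNReal.toReal_one]
      rw [this, one_mul]
    calc t' = ∫ _, t' ∂φ1 := by rw [integral_const]; simp
      _ = ∫ τ1, f0p t' τ1 * t' ∂φ1 := (integral_congr_ae heq).symm
      _ ≤ _ := hdev'
  have hPi0nonneg : 0 ≤ ∫ τ, f0p τ.1 τ.2 * τ.1 ∂(φ0.prod φ1) := by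
    refine integral_nonneg_of_ae ?_
    filter_upwards [haeprod] with τ hτ
    exact mul_nonneg (hf0p_nonneg _ _) hτ.1.1
  have hPi0ge : t ≤ ∫ τ, f0p τ.1 τ.2 * τ.1 ∂(φ0.prod φ1) := by
    by_contra hlt
    push_neg at hlt
    rcases eq_or_lt_of_le ht0 with h0 | h0
    · exact absurd hPi0nonneg (not_le.mpr (h0 ▸ hlt))
    · have := hstepA (((∫ τ, f0p τ.1 τ.2 * τ.1 ∂(φ0.prod φ1)) + t)/2) (by linarith) (by linarith)
      linarith
  -- φ0 is the point mass at t
  have hsingle : φ0 {t} = 1 := by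
    rcases eq_or_lt_of_le ht0 with h00 | h0pos
    · rw [← h00]
      rw [← h00, Set.Icc_self] at hIcc_t
      exact hIcc_t
    · have hint_τ : Integrable (fun τ : ℝ × ℝ => τ.1) (φ0.prod φ1) := by
        refine Integrable.mono' (integrable_const 1) measurable_fst.aestronglyMeasurable ?_
        filter_upwards [haeprod] with τ hτ
        rw [Real.norm_eq_abs, abs_of_nonneg hτ.1.1]
        exact hτ.1.2
      have hk0int : Integrable (fun τ : ℝ × ℝ => f0p τ.1 τ.2 * τ.1) (φ0.prod φ1) := by
        by_contra hni
        rw [integral_undef hni] at hPi0ge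
        linarith
      have hE : (∫ τ, f0p τ.1 τ.2 * τ.1 ∂(φ0.prod φ1)) ≤ ∫ τ, τ.1 ∂(φ0.prod φ1) := by
        refine integral_mono_ae hk0int hint_τ ?_
        filter_upwards [haeprod] with τ hτ
        calc f0p τ.1 τ.2 * τ.1 ≤ 1 * τ.1 := mul_le_mul_of_nonneg_right (hf0p_le_one _ _) hτ.1.1
          _ = τ.1 := one_mul _
      have hfst : (∫ τ, τ.1 ∂(φ0.prod φ1)) = ∫ τ0, τ0 ∂φ0 := by
        rw [MeasureTheory.integral_prod _ hint_τ]
        simp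
      have hτ0int : Integrable (fun τ0 : ℝ => τ0) φ0 := by
        refine Integrable.mono' (integrable_const 1) measurable_id.aestronglyMeasurable ?_
        filter_upwards [hae0] with τ0 h
        rw [Real.norm_eq_abs, abs_of_nonneg h.1]
        exact h.2
      have hE1 : (∫ τ0, τ0 ∂φ0) ≤ t := by
        calc (∫ τ0, τ0 ∂φ0) ≤ ∫ _, t ∂φ0 := by
              refine integral_mono_ae hτ0int (integrable_const t) ?_
              filter_upwards [hae_t] with τ0 h
              exact h.2
          _ = t := by rw [integral_const]; simp
      have hEeq : (∫ τ0, τ0 ∂φ0) = t := by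
        refine le_antisymm hE1 ?_
        rw [← hfst]
        linarith
      have hzero : (∫ τ0, t - τ0 ∂φ0) = 0 := by
        rw [integral_sub (integrable_const t) hτ0int, hEeq, integral_const]
        simp
      have haezero : (fun τ0 => t - τ0) =ᵐ[φ0] 0 := by
        refine (integral_eq_zero_iff_of_nonneg_ae ?_ ((integrable_const t).sub hτ0int)).mp hzero
        filter_upwards [hae_t] with τ0 h
        simp only [Pi.zero_apply, Pi.sub_apply]
        linarith [h.2]
      have hcompl : φ0 {t}ᶜ = 0 := by
        refine measure_mono_null (fun x hx => ?_) (MeasureTheory.ae_iff.mp haezero)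
        simp only [Set.mem_compl_iff, Set.mem_singleton_iff] at hx
        simp only [Set.mem_setOf_eq, Pi.zero_apply]
        intro h
        exact hx (by linarith)
      have hadd := measure_add_measure_compl (μ := φ0) (measurableSet_singleton t)
      rw [hcompl, add_zero, measure_univ] at hadd
      exact hadd
  have hdirac : φ0 = Measure.dirac t := aux_eq_dirac measure_univ hsingle
  -- the consumer buys from firm 0 with probability one at the equilibrium prices
  have H1' : (∫ τ1, f1p t τ1 ∂φ1) = 0 := by
    rw [hdirac, Measure.dirac_prod, (measurableEmbedding_prodMk_left t).integral_map] at H1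
    exact H1
  have haesm2 : AEStronglyMeasurable (fun τ1 => f1p t τ1) φ1 := by
    have hBcount : ({τ1 : ℝ | (1+t-τ1)/2 ∈ D} ∪ {τ1 : ℝ | 1 - τ1 ∈ D} : Set ℝ).Countable := by
      refine Set.Countable.union ?_ ?_
      · exact hDcount.preimage (f := fun τ1 : ℝ => (1+t-τ1)/2)
          (fun a b hab => by
            have : (1+t-a)/2 = (1+t-b)/2 := hab
            linarith)
      · exact hDcount.preimage (f := fun τ1 : ℝ => 1-τ1)
          (fun a b hab => by
            have : 1-a = 1-b := hab
            linarith)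
    refine aux_aesm_of_countable measure_univ hφ1.2
      (g := fun τ1 : ℝ => H (min ((1+t-τ1)/2) (1-τ1))) hBcount
      (hHmeas.comp (((measurable_const.sub measurable_id).div_const 2).min
        (measurable_const.sub measurable_id))) ?_
    intro τ1 h1 hB
    simp only [Set.mem_union, Set.mem_setOf_eq, not_or] at hB
    refine hf1p_eq t ⟨ht0, le_of_lt ht1⟩ τ1 h1 ?_
    rcases min_cases ((1+t-τ1)/2) (1-τ1) with ⟨heq, _⟩ | ⟨heq, _⟩
    · rw [heq]
      exact hnotD _ hB.1
    · rw [heq]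
      exact hnotD _ hB.2
  have hf1int : Integrable (fun τ1 => f1p t τ1) φ1 := by
    refine Integrable.mono' (integrable_const 1) haesm2 ?_
    filter_upwards with τ1
    rw [Real.norm_eq_abs, abs_of_nonneg (hf1p_nonneg _ _)]
    exact hf1p_le_one _ _
  have hf1zero : (fun τ1 => f1p t τ1) =ᵐ[φ1] 0 :=
    (integral_eq_zero_iff_of_nonneg_ae
      (Filter.Eventually.of_forall (fun _ => hf1p_nonneg _ _)) hf1int).mp H1'
  have hbuy0 : ∀ᵐ τ1 ∂φ1, f0p t τ1 = 1 := by
    filter_upwards [hae1, hf1zero] with τ1 h1 hz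
    have hν1 : ν {s | A t τ1 s = CAction.buy1} = 0 := by
      simp only [Pi.zero_apply, hf1p_def] at hz
      rcases (ENNReal.toReal_eq_zero_iff _).mp hz with h | h
      · exact h
      · exact absurd h (measure_ne_top ν _)
    have hae_main : ∀ᵐ s ∂ν, ¬ A t τ1 s = CAction.exit := by
      filter_upwards [hBR t ⟨ht0, le_of_lt ht1⟩ τ1 h1, hQm] with s hs hQs
      intro hA
      have h0s := hs CAction.buy0
      rw [hA] at h0s
      simp only [cUtil] at h0s
      linarith [hmt]
    have hone : ν {s | A t τ1 s = CAction.buy0} = 1 := by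
      have hcompl : ν {s | A t τ1 s = CAction.buy0}ᶜ = 0 := by
        refine measure_mono_null (fun s hs => ?_)
          (measure_union_null (MeasureTheory.ae_iff.mp hae_main) hν1)
        simp only [Set.mem_compl_iff, Set.mem_setOf_eq] at hs
        cases hA : A t τ1 s
        case buy0 => exact absurd hA hs
        case buy1 => exact Set.mem_union_right _ hA
        case exit => exact Set.mem_union_left _ (fun h => h hA)
      have hms : MeasurableSet {s | A t τ1 s = CAction.buy0} :=
        (hAmeas t τ1) (MeasurableSpace.measurableSet_top (s := {CAction.buy0}))
      have hadd := measure_add_measure_compl (μ := ν) hms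
      rw [hcompl, add_zero, measure_univ] at hadd
      exact hadd
    simp only [hf0p_def, hone, ENNReal.toReal_one]
  refine ⟨hsingle, ?_, ?_⟩
  · rw [hdirac, Measure.dirac_prod, (measurableEmbedding_prodMk_left t).integral_map]
    have heq1 : (fun τ1 : ℝ => f0p t τ1) =ᵐ[φ1] fun _ => (1:ℝ) := by
      filter_upwards [hbuy0] with τ1 h
      exact h
    calc (∫ τ1, f0p t τ1 ∂φ1) = ∫ _, (1:ℝ) ∂φ1 := integral_congr_ae heq1
      _ = 1 := by rw [integral_const]; simp
  · rw [hdirac, Measure.dirac_prod, (measurableEmbedding_prodMk_left t).integral_map]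
    have heq2 : (fun τ1 : ℝ => f0p t τ1 * t) =ᵐ[φ1] fun _ => t := by
      filter_upwards [hbuy0] with τ1 h
      rw [h, one_mul]
    calc (∫ τ1, f0p t τ1 * t ∂φ1) = ∫ _, t ∂φ1 := integral_congr_ae heq2
      _ = t := by rw [integral_const]; simp

end CoreLemma

section PosteriorFacts

lemma posterior_den_pos {μ q : ℝ} (hμ : μ ∈ Set.Ioo (0:ℝ) 1) (hq0 : 0 ≤ q) (hq1 : q ≤ 1) :
    0 < μ * q + (1 - μ) * (1 - q) := by
  obtain ⟨hμ0, hμ1⟩ := hμ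
  rcases le_or_gt q (1/2) with h | h
  · have h1 : (1-μ) * (1-q) ≥ (1-μ) * (1/2) :=
      mul_le_mul_of_nonneg_left (by linarith) (by linarith)
    have h2 : 0 ≤ μ * q := mul_nonneg (le_of_lt hμ0) hq0
    linarith
  · have h1 : μ * q ≥ μ * (1/2) := mul_le_mul_of_nonneg_left (le_of_lt h) (le_of_lt hμ0)
    have h2 : 0 ≤ (1-μ) * (1-q) := mul_nonneg (by linarith) (by linarith)
    linarith

lemma posterior_mono {μ a b : ℝ} (hμ : μ ∈ Set.Ioo (0:ℝ) 1) (ha : 0 ≤ a) (hb : b ≤ 1)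
    (hab : a ≤ b) : posterior μ a ≤ posterior μ b := by
  have hda := posterior_den_pos hμ ha (le_trans hab hb)
  have hdb := posterior_den_pos hμ (le_trans ha hab) hb
  rw [posterior, posterior, div_le_div_iff₀ hda hdb]
  nlinarith [mul_nonneg (mul_nonneg (le_of_lt hμ.1) (by linarith [hμ.2] : (0:ℝ) ≤ 1 - μ))
    (by linarith : (0:ℝ) ≤ b - a)]

lemma posterior_lt_one {μ q : ℝ} (hμ : μ ∈ Set.Ioo (0:ℝ) 1) (hq0 : 0 ≤ q) (hq1 : q < 1) :
    posterior μ q < 1 := by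
  have hd := posterior_den_pos hμ hq0 (le_of_lt hq1)
  rw [posterior, div_lt_one hd]
  nlinarith [hμ.1, hμ.2]

lemma posterior_pos {μ q : ℝ} (hμ : μ ∈ Set.Ioo (0:ℝ) 1) (hq0 : 0 < q) (hq1 : q ≤ 1) :
    0 < posterior μ q := by
  have hd := posterior_den_pos hμ (le_of_lt hq0) hq1
  exact div_pos (mul_pos hμ.1 hq0) hd

lemma posterior_continuousAt {μ q : ℝ} (hμ : μ ∈ Set.Ioo (0:ℝ) 1) (hq0 : 0 ≤ q) (hq1 : q ≤ 1) :
    ContinuousAt (posterior μ) q := by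
  have hd := posterior_den_pos hμ hq0 hq1
  have : ContinuousAt (fun x : ℝ => μ * x / (μ * x + (1 - μ) * (1 - x))) q := by
    refine ContinuousAt.div ?_ ?_ (ne_of_gt hd)
    · exact (continuous_const.mul continuous_id).continuousAt
    · exact ((continuous_const.mul continuous_id).add
        (continuous_const.mul (continuous_const.sub continuous_id))).continuousAt
  exact this

end PosteriorFacts

section SignalFacts

open MeasureTheory

variable {S : Type} [MeasurableSpace S]

lemma sig_p_meas (𝒮 : SignalStructure S) : Measurable 𝒮.p := by
  refine Measurable.div ?_ ?_
  · exact (Measure.measurable_rnDeriv _ _).ennreal_toReal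
  · exact ((Measure.measurable_rnDeriv _ _).ennreal_toReal.add
      (Measure.measurable_rnDeriv _ _).ennreal_toReal)

lemma sig_p_nonneg (𝒮 : SignalStructure S) (s : S) : 0 ≤ 𝒮.p s :=
  div_nonneg ENNReal.toReal_nonneg (add_nonneg ENNReal.toReal_nonneg ENNReal.toReal_nonneg)

lemma sig_p_le_one (𝒮 : SignalStructure S) (s : S) : 𝒮.p s ≤ 1 := by
  rw [SignalStructure.p]
  set a := (𝒮.f0 s).toReal
  set b := (𝒮.f1 s).toReal
  have ha : 0 ≤ a := ENNReal.toReal_nonneg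
  have hb : 0 ≤ b := ENNReal.toReal_nonneg
  rcases eq_or_lt_of_le (add_nonneg ha hb) with h | h
  · rw [← h, div_zero]
    exact zero_le_one
  · rw [div_le_one h]
    linarith

lemma sig_ref_finite (𝒮 : SignalStructure S) : IsFiniteMeasure 𝒮.ref := by
  haveI := 𝒮.prob0
  haveI := 𝒮.prob1
  constructor
  rw [SignalStructure.ref, Measure.smul_apply, Measure.add_apply, measure_univ, measure_univ]
  norm_num
  refine lt_of_le_of_lt (mul_le_mul_left (le_refl _) _) (?_ : (2:ℝ≥0∞)⁻¹ * 2 < ⊤)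
  rw [ENNReal.inv_mul_cancel (by norm_num) (by norm_num)]
  exact ENNReal.one_lt_top

lemma sig_F0_ac_ref (𝒮 : SignalStructure S) : 𝒮.F0 ≪ 𝒮.ref := by
  intro A hA
  rw [SignalStructure.ref, Measure.smul_apply, Measure.add_apply] at hA
  rcases mul_eq_zero.mp hA with h | h
  · exact absurd h (by simp)
  · exact (add_eq_zero.mp h).1

lemma sig_F1_ac_ref (𝒮 : SignalStructure S) : 𝒮.F1 ≪ 𝒮.ref := by
  intro A hA
  rw [SignalStructure.ref, Measure.smul_apply, Measure.add_apply] at hA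
  rcases mul_eq_zero.mp hA with h | h
  · exact absurd h (by simp)
  · exact (add_eq_zero.mp h).2

lemma sig_F1_toReal_f1_zero (𝒮 : SignalStructure S) :
    𝒮.F1 {s | (𝒮.f1 s).toReal = 0} = 0 := by
  haveI := 𝒮.prob1
  haveI := sig_ref_finite 𝒮
  have hwd : 𝒮.ref.withDensity (𝒮.F1.rnDeriv 𝒮.ref) = 𝒮.F1 :=
    Measure.withDensity_rnDeriv_eq _ _ (sig_F1_ac_ref 𝒮)
  have hZms : MeasurableSet {s | (𝒮.f1 s).toReal = 0} :=
    (Measure.measurable_rnDeriv _ _).ennreal_toReal (measurableSet_singleton 0)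
  rw [← hwd, withDensity_apply _ hZms]
  have hfin : ∀ᵐ s ∂𝒮.ref, 𝒮.F1.rnDeriv 𝒮.ref s < ⊤ := Measure.rnDeriv_lt_top _ _
  have : ∀ᵐ s ∂𝒮.ref, s ∈ {s | (𝒮.f1 s).toReal = 0} → 𝒮.F1.rnDeriv 𝒮.ref s = 0 := by
    filter_upwards [hfin] with s hs hmem
    simp only [Set.mem_setOf_eq, SignalStructure.f1] at hmem
    exact (ENNReal.toReal_eq_zero_iff _).mp hmem |>.resolve_right (ne_of_lt hs)
  rw [setLIntegral_congr_fun_ae hZms this]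
  simp

lemma sig_F0_toReal_f0_zero (𝒮 : SignalStructure S) :
    𝒮.F0 {s | (𝒮.f0 s).toReal = 0} = 0 := by
  haveI := 𝒮.prob0
  haveI := sig_ref_finite 𝒮
  have hwd : 𝒮.ref.withDensity (𝒮.F0.rnDeriv 𝒮.ref) = 𝒮.F0 :=
    Measure.withDensity_rnDeriv_eq _ _ (sig_F0_ac_ref 𝒮)
  have hZms : MeasurableSet {s | (𝒮.f0 s).toReal = 0} :=
    (Measure.measurable_rnDeriv _ _).ennreal_toReal (measurableSet_singleton 0)
  rw [← hwd, withDensity_apply _ hZms]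
  have hfin : ∀ᵐ s ∂𝒮.ref, 𝒮.F0.rnDeriv 𝒮.ref s < ⊤ := Measure.rnDeriv_lt_top _ _
  have : ∀ᵐ s ∂𝒮.ref, s ∈ {s | (𝒮.f0 s).toReal = 0} → 𝒮.F0.rnDeriv 𝒮.ref s = 0 := by
    filter_upwards [hfin] with s hs hmem
    simp only [Set.mem_setOf_eq, SignalStructure.f0] at hmem
    exact (ENNReal.toReal_eq_zero_iff _).mp hmem |>.resolve_right (ne_of_lt hs)
  rw [setLIntegral_congr_fun_ae hZms this]
  simp

end SignalFacts

section AlphaFacts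

open MeasureTheory

variable {S : Type} [MeasurableSpace S]

lemma sig_G0_nonneg (𝒮 : SignalStructure S) (x : ℝ) : 0 ≤ 𝒮.G0 x := ENNReal.toReal_nonneg

lemma sig_G0_mono (𝒮 : SignalStructure S) : Monotone 𝒮.G0 := by
  haveI := 𝒮.prob0
  intro a b hab
  exact ENNReal.toReal_mono (measure_ne_top _ _)
    (measure_mono (fun s hs => lt_of_lt_of_le hs hab))

lemma sig_G0_gt_one (𝒮 : SignalStructure S) {x : ℝ} (hx : 1 < x) : 𝒮.G0 x = 1 := by
  haveI := 𝒮.prob0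
  rw [SignalStructure.G0, show {s | 𝒮.p s < x} = Set.univ from
    Set.eq_univ_of_forall (fun s => lt_of_le_of_lt (sig_p_le_one 𝒮 s) hx)]
  simp

lemma sig_G0_nonpos_zero (𝒮 : SignalStructure S) {x : ℝ} (hx : x ≤ 0) : 𝒮.G0 x = 0 := by
  rw [SignalStructure.G0, show {s | 𝒮.p s < x} = ∅ from ?_]
  · simp
  · ext s
    simp only [Set.mem_setOf_eq, Set.mem_empty_iff_false, iff_false, not_lt]
    exact le_trans hx (sig_p_nonneg 𝒮 s)

lemma sig_lo_nonempty (𝒮 : SignalStructure S) : {x | 0 < 𝒮.G0 x}.Nonempty :=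
  ⟨2, by rw [Set.mem_setOf_eq, sig_G0_gt_one 𝒮 one_lt_two]; norm_num⟩

lemma sig_lo_bddBelow (𝒮 : SignalStructure S) : BddBelow {x | 0 < 𝒮.G0 x} := by
  refine ⟨0, fun y hy => ?_⟩
  by_contra h
  push_neg at h
  rw [Set.mem_setOf_eq, sig_G0_nonpos_zero 𝒮 (le_of_lt h)] at hy
  exact lt_irrefl 0 hy

lemma sig_alphaLo_nonneg (𝒮 : SignalStructure S) : 0 ≤ 𝒮.alphaLo :=
  le_csInf (sig_lo_nonempty 𝒮) (fun y hy => by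
    by_contra h
    push_neg at h
    rw [Set.mem_setOf_eq, sig_G0_nonpos_zero 𝒮 (le_of_lt h)] at hy
    exact lt_irrefl 0 hy)

lemma sig_alphaLo_le_one (𝒮 : SignalStructure S) : 𝒮.alphaLo ≤ 1 := by
  by_contra h
  push_neg at h
  have hmem : (1 + 𝒮.alphaLo)/2 ∈ {x | 0 < 𝒮.G0 x} := by
    rw [Set.mem_setOf_eq, sig_G0_gt_one 𝒮 (by linarith)]
    norm_num
  have h2 : 𝒮.alphaLo ≤ (1 + 𝒮.alphaLo)/2 := csInf_le (sig_lo_bddBelow 𝒮) hmem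
  linarith

lemma sig_G0_pos (𝒮 : SignalStructure S) {x : ℝ} (hx : 𝒮.alphaLo < x) : 0 < 𝒮.G0 x := by
  obtain ⟨y, hy, hyx⟩ :=
    (csInf_lt_iff (sig_lo_bddBelow 𝒮) (sig_lo_nonempty 𝒮)).mp hx
  exact lt_of_lt_of_le hy (sig_G0_mono 𝒮 (le_of_lt hyx))

lemma sig_G0_eq_zero (𝒮 : SignalStructure S) {x : ℝ} (hx : x < 𝒮.alphaLo) : 𝒮.G0 x = 0 := by
  by_contra h
  have hpos : 0 < 𝒮.G0 x := lt_of_le_of_ne (sig_G0_nonneg 𝒮 x) (Ne.symm h)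
  exact absurd (csInf_le (sig_lo_bddBelow 𝒮) hpos) (not_le.mpr hx)

lemma sig_hi_nonempty (𝒮 : SignalStructure S) : {x | 𝒮.G0 x < 1}.Nonempty :=
  ⟨0, by rw [Set.mem_setOf_eq, sig_G0_nonpos_zero 𝒮 (le_refl 0)]; norm_num⟩

lemma sig_hi_bddAbove (𝒮 : SignalStructure S) : BddAbove {x | 𝒮.G0 x < 1} := by
  refine ⟨1, fun y hy => ?_⟩
  by_contra h
  push_neg at h
  rw [Set.mem_setOf_eq, sig_G0_gt_one 𝒮 h] at hy
  exact lt_irrefl 1 hy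

lemma sig_alphaHi_nonneg (𝒮 : SignalStructure S) : 0 ≤ 𝒮.alphaHi :=
  le_csSup (sig_hi_bddAbove 𝒮)
    (by rw [Set.mem_setOf_eq, sig_G0_nonpos_zero 𝒮 (le_refl 0)]; norm_num)

lemma sig_alphaHi_le_one (𝒮 : SignalStructure S) : 𝒮.alphaHi ≤ 1 :=
  csSup_le (sig_hi_nonempty 𝒮) (fun y hy => by
    by_contra h
    push_neg at h
    rw [Set.mem_setOf_eq, sig_G0_gt_one 𝒮 h] at hy
    exact lt_irrefl 1 hy)

lemma sig_G0_lt_one (𝒮 : SignalStructure S) {x : ℝ} (hx : x < 𝒮.alphaHi) : 𝒮.G0 x < 1 := by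
  obtain ⟨y, hy, hxy⟩ :=
    (lt_csSup_iff (sig_hi_bddAbove 𝒮) (sig_hi_nonempty 𝒮)).mp hx
  exact lt_of_le_of_lt (sig_G0_mono 𝒮 (le_of_lt hxy)) hy

lemma sig_G0_eq_one (𝒮 : SignalStructure S) {x : ℝ} (hx : 𝒮.alphaHi < x) : 𝒮.G0 x = 1 := by
  refine le_antisymm ?_ ?_
  · haveI := 𝒮.prob0
    rw [SignalStructure.G0, show (1:ℝ) = (𝒮.F0 Set.univ).toReal by simp]
    exact ENNReal.toReal_mono (measure_ne_top _ _) (measure_mono (Set.subset_univ _))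
  · by_contra h
    push_neg at h
    exact absurd (le_csSup (sig_hi_bddAbove 𝒮) h) (not_le.mpr hx)

lemma sig_F0_lt_null (𝒮 : SignalStructure S) {x : ℝ} (hx : x < 𝒮.alphaLo) :
    𝒮.F0 {s | 𝒮.p s < x} = 0 := by
  haveI := 𝒮.prob0
  have := sig_G0_eq_zero 𝒮 hx
  rw [SignalStructure.G0] at this
  exact ((ENNReal.toReal_eq_zero_iff _).mp this).resolve_right (measure_ne_top _ _)

lemma sig_F0_lt_full (𝒮 : SignalStructure S) {x : ℝ} (hx : 𝒮.alphaHi < x) :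
    𝒮.F0 {s | 𝒮.p s < x} = 1 := by
  have := sig_G0_eq_one 𝒮 hx
  rw [SignalStructure.G0] at this
  exact (ENNReal.toReal_eq_one_iff _).mp this

lemma sig_Fmix_null (𝒮 : SignalStructure S) (μ : ℝ) {A : Set S}
    (h0 : 𝒮.F0 A = 0) (h1 : 𝒮.F1 A = 0) : 𝒮.Fmix μ A = 0 := by
  rw [SignalStructure.Fmix, Measure.add_apply, Measure.smul_apply, Measure.smul_apply, h0, h1]
  simp

lemma sig_alphaLo_lt_one (𝒮 : SignalStructure S) : 𝒮.alphaLo < 1 := by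
  haveI := 𝒮.prob1
  rcases lt_or_ge 𝒮.alphaLo 1 with h | h
  · exact h
  exfalso
  have hnull : 𝒮.F0 {s | 𝒮.p s < 1} = 0 := by
    have hU : {s | 𝒮.p s < 1} = ⋃ n : ℕ, {s | 𝒮.p s < 1 - 1/(n+1)} := by
      ext s
      simp only [Set.mem_setOf_eq, Set.mem_iUnion]
      constructor
      · intro hs
        obtain ⟨n, hn⟩ := exists_nat_one_div_lt (by linarith : (0:ℝ) < 1 - 𝒮.p s)
        exact ⟨n, by linarith⟩
      · rintro ⟨n, hn⟩
        have : (0:ℝ) < 1/((n:ℝ)+1) := by positivity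
        linarith
    rw [hU]
    refine measure_iUnion_null (fun n => ?_)
    refine sig_F0_lt_null 𝒮 (lt_of_lt_of_le ?_ h)
    have : (0:ℝ) < 1/((n:ℝ)+1) := by positivity
    linarith
  have h1null : 𝒮.F1 {s | 𝒮.p s < 1} = 0 := 𝒮.ac10 hnull
  have h2null : 𝒮.F1 {s | 𝒮.p s = 1} = 0 := by
    refine measure_mono_null (fun s hs => ?_) (sig_F1_toReal_f1_zero 𝒮)
    simp only [Set.mem_setOf_eq, SignalStructure.p] at hs ⊢
    have ha : 0 ≤ (𝒮.f0 s).toReal := ENNReal.toReal_nonneg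
    have hb : 0 ≤ (𝒮.f1 s).toReal := ENNReal.toReal_nonneg
    by_contra hbne
    have hbpos : 0 < (𝒮.f1 s).toReal := lt_of_le_of_ne hb (Ne.symm hbne)
    have habpos : 0 < (𝒮.f0 s).toReal + (𝒮.f1 s).toReal := by linarith
    rw [div_eq_one_iff_eq (ne_of_gt habpos)] at hs
    linarith
  have huniv : 𝒮.F1 Set.univ = 0 := by
    refine measure_mono_null (fun s _ => ?_) (measure_union_null h1null h2null)
    rcases lt_or_eq_of_le (sig_p_le_one 𝒮 s) with h' | h'
    · exact Or.inl h'
    · exact Or.inr h'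
  rw [measure_univ] at huniv
  exact one_ne_zero huniv

lemma sig_alphaHi_pos (𝒮 : SignalStructure S) : 0 < 𝒮.alphaHi := by
  haveI := 𝒮.prob0
  rcases lt_or_ge 0 𝒮.alphaHi with h | h
  · exact h
  exfalso
  have hge : ∀ x : ℝ, 0 < x → 𝒮.F0 {s | 𝒮.p s < x} = 1 :=
    fun x hx => sig_F0_lt_full 𝒮 (lt_of_le_of_lt h hx)
  have hgt : 𝒮.F0 {s | 0 < 𝒮.p s} = 0 := by
    have hU : {s | 0 < 𝒮.p s} = ⋃ n : ℕ, {s | 𝒮.p s < 1/(n+1)}ᶜ := by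
      ext s
      simp only [Set.mem_setOf_eq, Set.mem_iUnion, Set.mem_compl_iff, not_lt]
      constructor
      · intro hs
        obtain ⟨n, hn⟩ := exists_nat_one_div_lt hs
        exact ⟨n, le_of_lt hn⟩
      · rintro ⟨n, hn⟩
        have : (0:ℝ) < 1/((n:ℝ)+1) := by positivity
        linarith
    rw [hU]
    refine measure_iUnion_null (fun n => ?_)
    have hms : MeasurableSet {s | 𝒮.p s < 1/((n:ℝ)+1)} := (sig_p_meas 𝒮) measurableSet_Iio
    rw [measure_compl hms (measure_ne_top _ _), hge (1/((n:ℝ)+1)) (by positivity), measure_univ]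
    simp
  have hzero : 𝒮.F0 {s | 𝒮.p s = 0} = 0 := by
    refine measure_mono_null (fun s hs => ?_) (sig_F0_toReal_f0_zero 𝒮)
    simp only [Set.mem_setOf_eq, SignalStructure.p] at hs ⊢
    rcases div_eq_zero_iff.mp hs with h' | h'
    · exact h'
    · have ha : 0 ≤ (𝒮.f0 s).toReal := ENNReal.toReal_nonneg
      have hb : 0 ≤ (𝒮.f1 s).toReal := ENNReal.toReal_nonneg
      linarith
  have huniv : 𝒮.F0 Set.univ = 0 := by
    refine measure_mono_null (fun s _ => ?_) (measure_union_null hzero hgt)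
    rcases eq_or_lt_of_le (sig_p_nonneg 𝒮 s) with h' | h'
    · exact Or.inl h'.symm
    · exact Or.inr h'
  rw [measure_univ] at huniv
  exact one_ne_zero huniv

end AlphaFacts

section QFacts

open MeasureTheory

variable {S : Type} [MeasurableSpace S]

lemma sig_Fmix_prob (𝒮 : SignalStructure S) {μ : ℝ} (hμ : μ ∈ Set.Ioo (0:ℝ) 1) :
    IsProbabilityMeasure (𝒮.Fmix μ) := by
  haveI := 𝒮.prob0
  haveI := 𝒮.prob1
  constructor
  rw [SignalStructure.Fmix, Measure.add_apply, Measure.smul_apply, Measure.smul_apply,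
    measure_univ, measure_univ, smul_eq_mul, smul_eq_mul, mul_one, mul_one,
    ← ENNReal.ofReal_add (le_of_lt hμ.1) (by linarith [hμ.2] : (0:ℝ) ≤ 1 - μ)]
  norm_num

lemma sig_ae_p_lo (𝒮 : SignalStructure S) (μ : ℝ) :
    ∀ᵐ s ∂(𝒮.Fmix μ), 𝒮.alphaLo ≤ 𝒮.p s := by
  rw [MeasureTheory.ae_iff]
  have hset : {s | ¬ 𝒮.alphaLo ≤ 𝒮.p s} = ⋃ n : ℕ, {s | 𝒮.p s < 𝒮.alphaLo - 1/(n+1)} := by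
    ext s
    simp only [Set.mem_setOf_eq, not_le, Set.mem_iUnion]
    constructor
    · intro hs
      obtain ⟨n, hn⟩ := exists_nat_one_div_lt (by linarith : (0:ℝ) < 𝒮.alphaLo - 𝒮.p s)
      exact ⟨n, by linarith⟩
    · rintro ⟨n, hn⟩
      have : (0:ℝ) < 1/((n:ℝ)+1) := by positivity
      linarith
  rw [hset]
  refine measure_iUnion_null (fun n => ?_)
  have hlt : 𝒮.alphaLo - 1/((n:ℝ)+1) < 𝒮.alphaLo := by
    have : (0:ℝ) < 1/((n:ℝ)+1) := by positivity
    linarith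
  have h0 := sig_F0_lt_null 𝒮 hlt
  exact sig_Fmix_null 𝒮 μ h0 (𝒮.ac10 h0)

lemma sig_ae_p_hi (𝒮 : SignalStructure S) (μ : ℝ) :
    ∀ᵐ s ∂(𝒮.Fmix μ), 𝒮.p s ≤ 𝒮.alphaHi := by
  haveI := 𝒮.prob0
  rw [MeasureTheory.ae_iff]
  have hset : {s | ¬ 𝒮.p s ≤ 𝒮.alphaHi} = ⋃ n : ℕ, {s | 𝒮.p s < 𝒮.alphaHi + 1/(n+1)}ᶜ := by
    ext s
    simp only [Set.mem_setOf_eq, not_le, Set.mem_iUnion, Set.mem_compl_iff, not_lt]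
    constructor
    · intro hs
      obtain ⟨n, hn⟩ := exists_nat_one_div_lt (by linarith : (0:ℝ) < 𝒮.p s - 𝒮.alphaHi)
      exact ⟨n, by linarith⟩
    · rintro ⟨n, hn⟩
      have : (0:ℝ) < 1/((n:ℝ)+1) := by positivity
      linarith
  rw [hset]
  refine measure_iUnion_null (fun n => ?_)
  have hgt : 𝒮.alphaHi < 𝒮.alphaHi + 1/((n:ℝ)+1) := by
    have : (0:ℝ) < 1/((n:ℝ)+1) := by positivity
    linarith
  have hms : MeasurableSet {s | 𝒮.p s < 𝒮.alphaHi + 1/((n:ℝ)+1)} :=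
    (sig_p_meas 𝒮) measurableSet_Iio
  have h0 : 𝒮.F0 {s | 𝒮.p s < 𝒮.alphaHi + 1/((n:ℝ)+1)}ᶜ = 0 := by
    rw [measure_compl hms (measure_ne_top _ _), sig_F0_lt_full 𝒮 hgt, measure_univ]
    simp
  exact sig_Fmix_null 𝒮 μ h0 (𝒮.ac10 h0)

lemma sig_ae_Q_lo (𝒮 : SignalStructure S) {μ : ℝ} (hμ : μ ∈ Set.Ioo (0:ℝ) 1) :
    ∀ᵐ s ∂(𝒮.Fmix μ), posterior μ 𝒮.alphaLo ≤ posterior μ (𝒮.p s) := by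
  filter_upwards [sig_ae_p_lo 𝒮 μ] with s hs
  exact posterior_mono hμ (sig_alphaLo_nonneg 𝒮) (sig_p_le_one 𝒮 s) hs

lemma sig_ae_Q_hi (𝒮 : SignalStructure S) {μ : ℝ} (hμ : μ ∈ Set.Ioo (0:ℝ) 1) :
    ∀ᵐ s ∂(𝒮.Fmix μ), posterior μ (𝒮.p s) ≤ posterior μ 𝒮.alphaHi := by
  filter_upwards [sig_ae_p_hi 𝒮 μ] with s hs
  exact posterior_mono hμ (sig_p_nonneg 𝒮 s) (sig_alphaHi_le_one 𝒮) hs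

lemma sig_pos_lo (𝒮 : SignalStructure S) {μ : ℝ} (hμ : μ ∈ Set.Ioo (0:ℝ) 1) :
    ∀ u : ℝ, posterior μ 𝒮.alphaLo < u → 0 < 𝒮.Fmix μ {s | posterior μ (𝒮.p s) < u} := by
  intro u hu
  haveI := 𝒮.prob0
  -- find x slightly above alphaLo with posterior < u
  have hcont := posterior_continuousAt hμ (sig_alphaLo_nonneg 𝒮) (sig_alphaLo_le_one 𝒮)
  have hev : ∀ᶠ x in nhds 𝒮.alphaLo, posterior μ x < u :=
    hcont.eventually_lt_const hu
  obtain ⟨δ, hδpos, hδ⟩ := Metric.eventually_nhds_iff.mp hev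
  set x : ℝ := min (𝒮.alphaLo + δ/2) ((𝒮.alphaLo + 1)/2) with hx_def
  have hx1 : 𝒮.alphaLo < x :=
    lt_min (by linarith) (by linarith [sig_alphaLo_lt_one 𝒮])
  have hx2 : x ≤ 1 := by
    have := sig_alphaLo_le_one 𝒮
    calc x ≤ (𝒮.alphaLo + 1)/2 := min_le_right _ _
      _ ≤ 1 := by linarith
  have hx3 : posterior μ x < u := by
    refine hδ ?_
    rw [Real.dist_eq, abs_of_nonneg (by linarith : (0:ℝ) ≤ x - 𝒮.alphaLo)]
    calc x - 𝒮.alphaLo ≤ (𝒮.alphaLo + δ/2) - 𝒮.alphaLo := by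
          linarith [min_le_left (𝒮.alphaLo + δ/2) ((𝒮.alphaLo + 1)/2)]
      _ < δ := by linarith
  have hF0pos : 𝒮.F0 {s | 𝒮.p s < x} ≠ 0 := by
    intro h
    have := sig_G0_pos 𝒮 hx1
    rw [SignalStructure.G0, h] at this
    simp at this
  have hsub : {s | 𝒮.p s < x} ⊆ {s | posterior μ (𝒮.p s) < u} := by
    intro s hs
    simp only [Set.mem_setOf_eq] at hs ⊢
    exact lt_of_le_of_lt
      (posterior_mono hμ (sig_p_nonneg 𝒮 s) hx2 (le_of_lt hs)) hx3
  refine lt_of_lt_of_le ?_ (measure_mono hsub)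
  rw [SignalStructure.Fmix, Measure.add_apply, Measure.smul_apply, Measure.smul_apply]
  refine lt_of_lt_of_le ?_ le_self_add
  simp only [smul_eq_mul]
  refine ENNReal.mul_pos ?_ hF0pos
  simp only [ne_eq, ENNReal.ofReal_eq_zero, not_le]
  exact hμ.1

lemma sig_pos_hi (𝒮 : SignalStructure S) {μ : ℝ} (hμ : μ ∈ Set.Ioo (0:ℝ) 1) :
    ∀ u : ℝ, u < posterior μ 𝒮.alphaHi → 0 < 𝒮.Fmix μ {s | u < posterior μ (𝒮.p s)} := by
  intro u hu
  haveI := 𝒮.prob0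
  have hcont := posterior_continuousAt hμ (sig_alphaHi_nonneg 𝒮) (sig_alphaHi_le_one 𝒮)
  have hev : ∀ᶠ x in nhds 𝒮.alphaHi, u < posterior μ x :=
    hcont.eventually_const_lt hu
  obtain ⟨δ, hδpos, hδ⟩ := Metric.eventually_nhds_iff.mp hev
  set x : ℝ := max (𝒮.alphaHi - δ/2) (𝒮.alphaHi/2) with hx_def
  have hx1 : x < 𝒮.alphaHi :=
    max_lt (by linarith) (by linarith [sig_alphaHi_pos 𝒮])
  have hx0 : 0 ≤ x := by
    have := sig_alphaHi_pos 𝒮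
    calc (0:ℝ) ≤ 𝒮.alphaHi/2 := by linarith
      _ ≤ x := le_max_right _ _
  have hx3 : u < posterior μ x := by
    refine hδ ?_
    rw [Real.dist_eq, abs_of_nonpos (by linarith : x - 𝒮.alphaHi ≤ 0)]
    have h1 : 𝒮.alphaHi - δ/2 ≤ x := le_max_left _ _
    linarith
  have hF0pos : 𝒮.F0 {s | 𝒮.p s < x}ᶜ ≠ 0 := by
    have hms : MeasurableSet {s | 𝒮.p s < x} := (sig_p_meas 𝒮) measurableSet_Iio
    rw [measure_compl hms (measure_ne_top _ _), measure_univ]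
    have hlt : 𝒮.F0 {s | 𝒮.p s < x} < 1 := by
      have := sig_G0_lt_one 𝒮 hx1
      rw [SignalStructure.G0] at this
      by_contra hge
      push_neg at hge
      have : (1:ℝ) ≤ (𝒮.F0 {s | 𝒮.p s < x}).toReal := by
        rw [show (1:ℝ) = (1:ℝ≥0∞).toReal by simp]
        exact ENNReal.toReal_mono (measure_ne_top _ _) hge
      linarith
    simp only [ne_eq, tsub_eq_zero_iff_le, not_le]
    exact hlt
  have hsub : {s | 𝒮.p s < x}ᶜ ⊆ {s | u < posterior μ (𝒮.p s)} := by
    intro s hs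
    simp only [Set.mem_compl_iff, Set.mem_setOf_eq, not_lt] at hs
    simp only [Set.mem_setOf_eq]
    exact lt_of_lt_of_le hx3
      (posterior_mono hμ hx0 (sig_p_le_one 𝒮 s) hs)
  refine lt_of_lt_of_le ?_ (measure_mono hsub)
  rw [SignalStructure.Fmix, Measure.add_apply, Measure.smul_apply, Measure.smul_apply]
  refine lt_of_lt_of_le ?_ le_self_add
  simp only [smul_eq_mul]
  refine ENNReal.mul_pos ?_ hF0pos
  simp only [ne_eq, ENNReal.ofReal_eq_zero, not_le]
  exact hμ.1

end QFacts

section SwapHelpers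

open MeasureTheory

/-- Swap the roles of the two firms in a consumer action. -/
def swapA : CAction → CAction
  | CAction.buy0 => CAction.buy1
  | CAction.buy1 => CAction.buy0
  | CAction.exit => CAction.exit

lemma swapA_eq_buy0_iff (a : CAction) : swapA a = CAction.buy0 ↔ a = CAction.buy1 := by
  cases a <;> simp [swapA]

lemma swapA_eq_buy1_iff (a : CAction) : swapA a = CAction.buy1 ↔ a = CAction.buy0 := by
  cases a <;> simp [swapA]

lemma swapA_swapA (a : CAction) : swapA (swapA a) = a := by cases a <;> rfl

lemma cUtil_swap (q τ0 τ1 : ℝ) (a : CAction) :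
    cUtil (1 - q) τ0 τ1 (swapA a) = cUtil q τ1 τ0 a := by
  cases a <;> simp [swapA, cUtil] <;> ring

lemma aux_swap_integral {μa μb : Measure ℝ} [SFinite μa] [SFinite μb] (f : ℝ × ℝ → ℝ) :
    ∫ τ, f τ ∂(μa.prod μb) = ∫ τ, f (τ.2, τ.1) ∂(μb.prod μa) := by
  have hemb : MeasurableEmbedding (Prod.swap : ℝ × ℝ → ℝ × ℝ) :=
    MeasurableEquiv.prodComm.measurableEmbedding
  rw [show μa.prod μb = Measure.map Prod.swap (μb.prod μa) from (Measure.prod_swap).symm,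
    hemb.integral_map]
  rfl

end SwapHelpers
/-- In a deterrence equilibrium in which Firm 1 is deterred, Firm 0 plays
the pure price 2α⁻_μ − 1 with probability one, the consumer buys from Firm 0 with
probability one, and Firm 0's payoff is 2α⁻_μ − 1.  Symmetrically, if Firm 0 is
deterred, Firm 1 plays the pure price 1 − 2α⁺_μ with probability one and earns
1 − 2α⁺_μ. -/
theorem stmt6 {S : Type} [MeasurableSpace S] (𝒮 : SignalStructure S)
    (g0 g1 : ℝ → ℝ) (hA : 𝒮.Assumption1 g0 g1)
    (μ : ℝ) (hμ : μ ∈ Ioo (0:ℝ) 1)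
    (φ0 φ1 : Measure ℝ) (σ : CStrategy S)
    (hD : 𝒮.IsDeterrence μ φ0 φ1 σ) :
    (𝒮.actProbMix μ φ0 φ1 σ CAction.buy1 = 0 →
      φ0 {2 * posterior μ 𝒮.alphaLo - 1} = 1 ∧
        𝒮.actProbMix μ φ0 φ1 σ CAction.buy0 = 1 ∧
        𝒮.Pi0 μ φ0 φ1 σ = 2 * posterior μ 𝒮.alphaLo - 1) ∧
      (𝒮.actProbMix μ φ0 φ1 σ CAction.buy0 = 0 →
        φ1 {1 - 2 * posterior μ 𝒮.alphaHi} = 1 ∧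
          𝒮.actProbMix μ φ0 φ1 σ CAction.buy1 = 1 ∧
          𝒮.Pi1 μ φ0 φ1 σ = 1 - 2 * posterior μ 𝒮.alphaHi) := by
  classical
  obtain ⟨hSPE, _⟩ := hD
  haveI hνP : IsProbabilityMeasure (𝒮.Fmix μ) := sig_Fmix_prob 𝒮 hμ
  haveI hP0 : IsProbabilityMeasure φ0 := hSPE.strat0.1
  haveI hP1 : IsProbabilityMeasure φ1 := hSPE.strat1.1
  have hpostmeas : Measurable (posterior μ) := by
    unfold posterior
    exact Measurable.div (measurable_const.mul measurable_id)
      ((measurable_const.mul measurable_id).add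
        (measurable_const.mul (measurable_const.sub measurable_id)))
  constructor
  · -- Firm 1 is deterred
    intro H1
    have hcore := core_deterrence (𝒮.Fmix μ) (fun s => posterior μ (𝒮.p s))
      (hpostmeas.comp (sig_p_meas 𝒮))
      (posterior μ 𝒮.alphaLo)
      (posterior_lt_one hμ (sig_alphaLo_nonneg 𝒮) (sig_alphaLo_lt_one 𝒮))
      (sig_ae_Q_lo 𝒮 hμ)
      (fun u hu => sig_pos_lo 𝒮 hμ u hu)
      φ0 φ1 hSPE.strat0 hSPE.strat1 σ hSPE.meas hSPE.consumerBR
      (fun ψ hψ => hSPE.firm0opt ψ hψ) (fun ψ hψ => hSPE.firm1opt ψ hψ) H1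
    exact hcore
  · -- Firm 0 is deterred
    intro H0
    set M : ℝ := posterior μ 𝒮.alphaHi with hM_def
    have hMpos : 0 < M := posterior_pos hμ (sig_alphaHi_pos 𝒮) (sig_alphaHi_le_one 𝒮)
    have hQ'meas : Measurable (fun s => 1 - posterior μ (𝒮.p s)) :=
      measurable_const.sub (hpostmeas.comp (sig_p_meas 𝒮))
    have hA'meas : ∀ τ0 τ1, Measurable (fun s => swapA (σ τ1 τ0 s)) :=
      fun τ0 τ1 => Measurable.comp (measurable_from_top (f := swapA)) (hSPE.meas τ1 τ0)
    have hset0 : ∀ τ0 τ1 : ℝ, {s | swapA (σ τ1 τ0 s) = CAction.buy0} = {s | σ τ1 τ0 s = CAction.buy1} :=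
      fun τ0 τ1 => Set.ext (fun s => swapA_eq_buy0_iff _)
    have hset1 : ∀ τ0 τ1 : ℝ, {s | swapA (σ τ1 τ0 s) = CAction.buy1} = {s | σ τ1 τ0 s = CAction.buy0} :=
      fun τ0 τ1 => Set.ext (fun s => swapA_eq_buy1_iff _)
    have hBR' : ∀ τ0 ∈ Set.Icc (0:ℝ) 1, ∀ τ1 ∈ Set.Icc (0:ℝ) 1, ∀ᵐ s ∂(𝒮.Fmix μ),
        ∀ a : CAction, cUtil (1 - posterior μ (𝒮.p s)) τ0 τ1 a ≤
          cUtil (1 - posterior μ (𝒮.p s)) τ0 τ1 (swapA (σ τ1 τ0 s)) := by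
      intro τ0 h0 τ1 h1
      filter_upwards [hSPE.consumerBR τ1 h1 τ0 h0] with s hs a
      have ha : a = swapA (swapA a) := (swapA_swapA a).symm
      rw [ha, cUtil_swap, cUtil_swap]
      exact hs (swapA a)
    have hQm' : ∀ᵐ s ∂(𝒮.Fmix μ), 1 - M ≤ 1 - posterior μ (𝒮.p s) := by
      filter_upwards [sig_ae_Q_hi 𝒮 hμ] with s hs
      rw [hM_def]
      linarith
    have hpos' : ∀ u : ℝ, 1 - M < u → 0 < 𝒮.Fmix μ {s | 1 - posterior μ (𝒮.p s) < u} := by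
      intro u hu
      have heq : {s | 1 - posterior μ (𝒮.p s) < u} = {s | 1 - u < posterior μ (𝒮.p s)} := by
        ext s
        simp only [Set.mem_setOf_eq]
        constructor <;> intro h <;> linarith
      rw [heq]
      exact sig_pos_hi 𝒮 hμ (1-u) (by rw [hM_def] at hu; linarith)
    have hf0opt' : ∀ ψ : Measure ℝ, IsPriceStrategy ψ →
        (∫ τ, (𝒮.Fmix μ {s | swapA (σ τ.2 τ.1 s) = CAction.buy0}).toReal * τ.1 ∂(ψ.prod φ0)) ≤
        ∫ τ, (𝒮.Fmix μ {s | swapA (σ τ.2 τ.1 s) = CAction.buy0}).toReal * τ.1 ∂(φ1.prod φ0) := by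
      intro ψ hψ
      haveI := hψ.1
      have h1 : (∫ τ, (𝒮.Fmix μ {s | σ τ.1 τ.2 s = CAction.buy1}).toReal * τ.2 ∂(φ0.prod ψ)) ≤
          ∫ τ, (𝒮.Fmix μ {s | σ τ.1 τ.2 s = CAction.buy1}).toReal * τ.2 ∂(φ0.prod φ1) :=
        hSPE.firm1opt ψ hψ
      have e1 : (∫ τ, (𝒮.Fmix μ {s | swapA (σ τ.2 τ.1 s) = CAction.buy0}).toReal * τ.1 ∂(ψ.prod φ0)) =
          ∫ τ, (𝒮.Fmix μ {s | σ τ.1 τ.2 s = CAction.buy1}).toReal * τ.2 ∂(φ0.prod ψ) := by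
        rw [aux_swap_integral]
        refine integral_congr_ae (Filter.Eventually.of_forall (fun τ => ?_))
        show (𝒮.Fmix μ {s | swapA (σ τ.1 τ.2 s) = CAction.buy0}).toReal * τ.2 = _
        rw [hset0]
      have e2 : (∫ τ, (𝒮.Fmix μ {s | swapA (σ τ.2 τ.1 s) = CAction.buy0}).toReal * τ.1 ∂(φ1.prod φ0)) =
          ∫ τ, (𝒮.Fmix μ {s | σ τ.1 τ.2 s = CAction.buy1}).toReal * τ.2 ∂(φ0.prod φ1) := by
        rw [aux_swap_integral]
        refine integral_congr_ae (Filter.Eventually.of_forall (fun τ => ?_))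
        show (𝒮.Fmix μ {s | swapA (σ τ.1 τ.2 s) = CAction.buy0}).toReal * τ.2 = _
        rw [hset0]
      rw [e1, e2]
      exact h1
    have hf1opt' : ∀ ψ : Measure ℝ, IsPriceStrategy ψ →
        (∫ τ, (𝒮.Fmix μ {s | swapA (σ τ.2 τ.1 s) = CAction.buy1}).toReal * τ.2 ∂(φ1.prod ψ)) ≤
        ∫ τ, (𝒮.Fmix μ {s | swapA (σ τ.2 τ.1 s) = CAction.buy1}).toReal * τ.2 ∂(φ1.prod φ0) := by
      intro ψ hψ
      haveI := hψ.1
      have h1 : (∫ τ, (𝒮.Fmix μ {s | σ τ.1 τ.2 s = CAction.buy0}).toReal * τ.1 ∂(ψ.prod φ1)) ≤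
          ∫ τ, (𝒮.Fmix μ {s | σ τ.1 τ.2 s = CAction.buy0}).toReal * τ.1 ∂(φ0.prod φ1) :=
        hSPE.firm0opt ψ hψ
      have e1 : (∫ τ, (𝒮.Fmix μ {s | swapA (σ τ.2 τ.1 s) = CAction.buy1}).toReal * τ.2 ∂(φ1.prod ψ)) =
          ∫ τ, (𝒮.Fmix μ {s | σ τ.1 τ.2 s = CAction.buy0}).toReal * τ.1 ∂(ψ.prod φ1) := by
        rw [aux_swap_integral]
        refine integral_congr_ae (Filter.Eventually.of_forall (fun τ => ?_))
        show (𝒮.Fmix μ {s | swapA (σ τ.1 τ.2 s) = CAction.buy1}).toReal * τ.1 = _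
        rw [hset1]
      have e2 : (∫ τ, (𝒮.Fmix μ {s | swapA (σ τ.2 τ.1 s) = CAction.buy1}).toReal * τ.2 ∂(φ1.prod φ0)) =
          ∫ τ, (𝒮.Fmix μ {s | σ τ.1 τ.2 s = CAction.buy0}).toReal * τ.1 ∂(φ0.prod φ1) := by
        rw [aux_swap_integral]
        refine integral_congr_ae (Filter.Eventually.of_forall (fun τ => ?_))
        show (𝒮.Fmix μ {s | swapA (σ τ.1 τ.2 s) = CAction.buy1}).toReal * τ.1 = _
        rw [hset1]
      rw [e1, e2]
      exact h1
    have H0' : (∫ τ, (𝒮.Fmix μ {s | swapA (σ τ.2 τ.1 s) = CAction.buy1}).toReal ∂(φ1.prod φ0)) = 0 := by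
      have e : (∫ τ, (𝒮.Fmix μ {s | swapA (σ τ.2 τ.1 s) = CAction.buy1}).toReal ∂(φ1.prod φ0)) =
          ∫ τ, (𝒮.Fmix μ {s | σ τ.1 τ.2 s = CAction.buy0}).toReal ∂(φ0.prod φ1) := by
        rw [aux_swap_integral]
        refine integral_congr_ae (Filter.Eventually.of_forall (fun τ => ?_))
        show (𝒮.Fmix μ {s | swapA (σ τ.1 τ.2 s) = CAction.buy1}).toReal = _
        rw [hset1]
      rw [e]
      exact H0
    have hcore := core_deterrence (𝒮.Fmix μ) (fun s => 1 - posterior μ (𝒮.p s)) hQ'meas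
      (1 - M) (by linarith)
      hQm' hpos'
      φ1 φ0 hSPE.strat1 hSPE.strat0
      (fun τ0 τ1 s => swapA (σ τ1 τ0 s)) hA'meas hBR' hf0opt' hf1opt' H0'
    obtain ⟨hc1, hc2, hc3⟩ := hcore
    refine ⟨?_, ?_, ?_⟩
    · rw [show (1 - 2 * M : ℝ) = 2*(1-M) - 1 by ring]
      exact hc1
    · have e : 𝒮.actProbMix μ φ0 φ1 σ CAction.buy1 =
          ∫ τ, (𝒮.Fmix μ {s | swapA (σ τ.2 τ.1 s) = CAction.buy0}).toReal ∂(φ1.prod φ0) := by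
        show (∫ τ, (𝒮.Fmix μ {s | σ τ.1 τ.2 s = CAction.buy1}).toReal ∂(φ0.prod φ1)) = _
        rw [aux_swap_integral (μa := φ0) (μb := φ1)]
        refine integral_congr_ae (Filter.Eventually.of_forall (fun τ => ?_))
        show (𝒮.Fmix μ {s | σ τ.2 τ.1 s = CAction.buy1}).toReal = _
        rw [← hset0 τ.1 τ.2]
      rw [e]
      exact hc2
    · have e : 𝒮.Pi1 μ φ0 φ1 σ =
          ∫ τ, (𝒮.Fmix μ {s | swapA (σ τ.2 τ.1 s) = CAction.buy0}).toReal * τ.1 ∂(φ1.prod φ0) := by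
        show (∫ τ, (𝒮.Fmix μ {s | σ τ.1 τ.2 s = CAction.buy1}).toReal * τ.2 ∂(φ0.prod φ1)) = _
        rw [aux_swap_integral (μa := φ0) (μb := φ1)]
        refine integral_congr_ae (Filter.Eventually.of_forall (fun τ => ?_))
        show (𝒮.Fmix μ {s | σ τ.2 τ.1 s = CAction.buy1}).toReal * τ.1 = _
        rw [← hset0 τ.1 τ.2]
      rw [e, hc3]
      ring
end
end

section
/- Suppose signals are bounded. Let (μ_k)_{k≥1} ⊆ (0,1) be a sequence of priors with μ_k → 1, and for each k let (φ₀^k, φ₁^k, σ_k) be a subgame perfect equilibrium of the stage game Γ(μ_k). Then Firm 0's equilibrium price converges to 1: the measures φ₀^k converge weakly to the Dirac measure at 1, i.e., for every ε > 0, φ₀^k([1−ε, 1]) → 1 as k → ∞. -/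
open MeasureTheory Set Filter Topology
open scoped ENNReal NNReal

noncomputable section

namespace SignalStructure

variable {S : Type} [MeasurableSpace S]

lemma p_nonneg (𝒮 : SignalStructure S) (s : S) : 0 ≤ 𝒮.p s :=
  div_nonneg ENNReal.toReal_nonneg (add_nonneg ENNReal.toReal_nonneg ENNReal.toReal_nonneg)

lemma p_le_one (𝒮 : SignalStructure S) (s : S) : 𝒮.p s ≤ 1 := by
  unfold p
  by_cases h : (𝒮.f0 s).toReal + (𝒮.f1 s).toReal = 0
  · rw [h, div_zero]; norm_num
  · have hpos : 0 < (𝒮.f0 s).toReal + (𝒮.f1 s).toReal :=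
      lt_of_le_of_ne (add_nonneg ENNReal.toReal_nonneg ENNReal.toReal_nonneg) (Ne.symm h)
    rw [div_le_one hpos]
    nlinarith [ENNReal.toReal_nonneg (a := 𝒮.f1 s)]

lemma F0_small (𝒮 : SignalStructure S) (hb : 𝒮.Bounded) :
    𝒮.F0 {s | 𝒮.p s < 𝒮.alphaLo / 2} = 0 := by
  haveI := 𝒮.prob0
  by_contra h
  have hG : 0 < 𝒮.G0 (𝒮.alphaLo / 2) :=
    ENNReal.toReal_pos h (measure_ne_top _ _)
  have hbdd : BddBelow {x | 0 < 𝒮.G0 x} := by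
    refine ⟨0, fun x hx => ?_⟩
    by_contra hx0
    push_neg at hx0
    have hempty : {s | 𝒮.p s < x} = ∅ := by
      ext s
      simp only [mem_setOf_eq, mem_empty_iff_false, iff_false, not_lt]
      exact le_of_lt (lt_of_lt_of_le hx0 (𝒮.p_nonneg s))
    have : 𝒮.G0 x = 0 := by
      unfold G0; rw [hempty]; simp
    simp only [mem_setOf_eq, this] at hx
    exact lt_irrefl 0 hx
  have := csInf_le hbdd (show 𝒮.alphaLo / 2 ∈ {x | 0 < 𝒮.G0 x} from hG)
  have h1 := hb.1
  unfold alphaLo at this h1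
  linarith

lemma Fmix_small (𝒮 : SignalStructure S) (hb : 𝒮.Bounded) (μ : ℝ) :
    𝒮.Fmix μ {s | 𝒮.p s < 𝒮.alphaLo / 2} = 0 := by
  have h0 := 𝒮.F0_small hb
  have h1 : 𝒮.F1 {s | 𝒮.p s < 𝒮.alphaLo / 2} = 0 := 𝒮.ac10 h0
  simp [Fmix, Measure.coe_add, Pi.add_apply, Measure.coe_smul, Pi.smul_apply,
    smul_eq_mul, h0, h1]

lemma Fmix_prob (𝒮 : SignalStructure S) {μ : ℝ} (hμ : μ ∈ Ioo (0:ℝ) 1) :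
    IsProbabilityMeasure (𝒮.Fmix μ) := by
  haveI := 𝒮.prob0; haveI := 𝒮.prob1
  constructor
  simp only [Fmix, Measure.coe_add, Pi.add_apply, Measure.coe_smul, Pi.smul_apply,
    smul_eq_mul, measure_univ, mul_one]
  rw [← ENNReal.ofReal_add (by linarith [hμ.1]) (by linarith [hμ.2])]
  norm_num

lemma posterior_bounds {μ c q : ℝ} (hc : 0 < c) (hμ : μ ∈ Ioo (0:ℝ) 1)
    (hq : q ∈ Icc c 1) :
    1 - (1 - μ) / (μ * c) ≤ posterior μ q ∧ posterior μ q ≤ 1 := by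
  obtain ⟨hμ0, hμ1⟩ := hμ
  obtain ⟨hqc, hq1⟩ := hq
  have hD : 0 < μ * q + (1 - μ) * (1 - q) := by nlinarith
  unfold posterior
  constructor
  · have h1 : μ * q / (μ * q + (1 - μ) * (1 - q))
        = 1 - (1 - μ) * (1 - q) / (μ * q + (1 - μ) * (1 - q)) := by
      field_simp
      ring
    rw [h1]
    have h2 : (1 - μ) * (1 - q) / (μ * q + (1 - μ) * (1 - q)) ≤ (1 - μ) / (μ * c) := by
      apply div_le_div₀ (by linarith) (by nlinarith) (by positivity) (by nlinarith)
    linarith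
  · rw [div_le_one hD]; nlinarith

lemma actProb_one (𝒮 : SignalStructure S) (hb : 𝒮.Bounded) {μ : ℝ}
    (hμ : μ ∈ Ioo (0:ℝ) 1) {φ0 φ1 : Measure ℝ} {σ : CStrategy S}
    (hS : 𝒮.IsSPE μ φ0 φ1 σ)
    {τ0 : ℝ} (hτ0 : τ0 ∈ Icc (0:ℝ) 1)
    (hτ0' : τ0 < 2 * (1 - (1 - μ) / (μ * (𝒮.alphaLo / 2))) - 1)
    {τ1 : ℝ} (hτ1 : τ1 ∈ Icc (0:ℝ) 1) :
    𝒮.actProb μ σ τ0 τ1 CAction.buy0 = 1 := by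
  haveI := 𝒮.Fmix_prob hμ
  have hcpos : 0 < 𝒮.alphaLo / 2 := by have := hb.1; positivity
  have hae1 := hS.consumerBR τ0 hτ0 τ1 hτ1
  have hae2 : ∀ᵐ s ∂(𝒮.Fmix μ), 𝒮.alphaLo / 2 ≤ 𝒮.p s := by
    rw [ae_iff]
    have heq : {s | ¬ 𝒮.alphaLo / 2 ≤ 𝒮.p s} = {s | 𝒮.p s < 𝒮.alphaLo / 2} := by
      ext s; simp [not_le]
    rw [heq]
    exact 𝒮.Fmix_small hb μ
  have hbuy : ∀ᵐ s ∂(𝒮.Fmix μ), σ τ0 τ1 s = CAction.buy0 := by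
    filter_upwards [hae1, hae2] with s h1 h2
    have hq := posterior_bounds hcpos hμ ⟨h2, 𝒮.p_le_one s⟩
    set q := posterior μ (𝒮.p s) with hqdef
    have hL : 1 - (1 - μ) / (μ * (𝒮.alphaLo / 2)) ≤ q := hq.1
    have hq1 : q ≤ 1 := hq.2
    have key0 : cUtil q τ0 τ1 CAction.buy1 < cUtil q τ0 τ1 CAction.buy0 := by
      simp only [cUtil]; linarith [hτ1.1]
    have key1 : cUtil q τ0 τ1 CAction.exit < cUtil q τ0 τ1 CAction.buy0 := by
      simp only [cUtil]; linarith
    rcases h : σ τ0 τ1 s with _ | _ | _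
    · rfl
    · have := h1 CAction.buy0
      rw [h] at this
      exact absurd this (not_le.mpr key0)
    · have := h1 CAction.buy0
      rw [h] at this
      exact absurd this (not_le.mpr key1)
  have hms : MeasurableSet {s | σ τ0 τ1 s = CAction.buy0} :=
    hS.meas τ0 τ1 (show MeasurableSet[⊤] {CAction.buy0} from MeasurableSpace.measurableSet_top)
  have hcompl : 𝒮.Fmix μ ({s | σ τ0 τ1 s = CAction.buy0}ᶜ) = 0 := by
    rw [ae_iff] at hbuy
    exact hbuy
  unfold actProb
  rw [(prob_compl_eq_zero_iff hms).mp hcompl]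
  simp

lemma Pi0_dirac (𝒮 : SignalStructure S) (hb : 𝒮.Bounded) {μ : ℝ}
    (hμ : μ ∈ Ioo (0:ℝ) 1) {φ0 φ1 : Measure ℝ} {σ : CStrategy S}
    (hS : 𝒮.IsSPE μ φ0 φ1 σ)
    {τ0 : ℝ} (hτ0 : τ0 ∈ Icc (0:ℝ) 1)
    (hτ0' : τ0 < 2 * (1 - (1 - μ) / (μ * (𝒮.alphaLo / 2))) - 1) :
    𝒮.Pi0 μ (Measure.dirac τ0) φ1 σ = τ0 := by
  haveI := hS.strat1.1
  haveI : IsProbabilityMeasure ((Measure.dirac τ0).prod φ1) := by infer_instance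
  unfold Pi0
  have hBmeas : MeasurableSet (({τ0} : Set ℝ) ×ˢ Icc (0:ℝ) 1) :=
    (measurableSet_singleton τ0).prod measurableSet_Icc
  have hB : ((Measure.dirac τ0).prod φ1) ((({τ0} : Set ℝ) ×ˢ Icc (0:ℝ) 1)ᶜ) = 0 := by
    rw [prob_compl_eq_zero_iff hBmeas, Measure.prod_prod,
      Measure.dirac_apply_of_mem (mem_singleton τ0), hS.strat1.2, one_mul]
  have hae : ∀ᵐ τ ∂((Measure.dirac τ0).prod φ1),
      𝒮.actProb μ σ τ.1 τ.2 CAction.buy0 * τ.1 = τ0 := by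
    rw [ae_iff]
    refine measure_mono_null ?_ hB
    intro τ hτ
    simp only [mem_setOf_eq] at hτ
    simp only [mem_compl_iff, mem_prod, mem_singleton_iff, not_and_or]
    by_contra hcon
    push_neg at hcon
    obtain ⟨h1, h2⟩ := hcon
    apply hτ
    rw [h1, 𝒮.actProb_one hb hμ hS hτ0 hτ0' h2, one_mul]
  rw [integral_congr_ae hae, integral_const, probReal_univ]
  simp

lemma actProb_le_one (𝒮 : SignalStructure S) {μ : ℝ} (hμ : μ ∈ Ioo (0:ℝ) 1)
    (σ : CStrategy S) (τ0 τ1 : ℝ) (a : CAction) :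
    𝒮.actProb μ σ τ0 τ1 a ≤ 1 := by
  haveI := 𝒮.Fmix_prob hμ
  unfold actProb
  have := prob_le_one (μ := 𝒮.Fmix μ) (s := {s | σ τ0 τ1 s = a})
  calc (𝒮.Fmix μ {s | σ τ0 τ1 s = a}).toReal
      ≤ (1 : ℝ≥0∞).toReal := ENNReal.toReal_mono ENNReal.one_ne_top this
    _ = 1 := by simp

end SignalStructure

/-- With bounded signals, along any sequence of priors μ_k → 1 and SPEs
of Γ(μ_k), Firm 0's equilibrium price converges to 1: for every ε > 0,
φ₀ᵏ([1−ε,1]) → 1. -/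
theorem stmt11 {S : Type} [MeasurableSpace S] (𝒮 : SignalStructure S)
    (g0 g1 : ℝ → ℝ) (hA : 𝒮.Assumption1 g0 g1)
    (hb : 𝒮.Bounded)
    (μseq : ℕ → ℝ) (hμ : ∀ k, μseq k ∈ Ioo (0:ℝ) 1)
    (hlim : Tendsto μseq atTop (𝓝 1))
    (φ0 φ1 : ℕ → Measure ℝ) (σ : ℕ → CStrategy S)
    (hSPE : ∀ k, 𝒮.IsSPE (μseq k) (φ0 k) (φ1 k) (σ k)) :
    ∀ ε > (0:ℝ),
      Tendsto (fun k => ((φ0 k) (Icc (1 - ε) 1)).toReal) atTop (𝓝 1) := by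
  -- It suffices to prove the claim for ε ∈ (0, 1].
  have main : ∀ ε : ℝ, 0 < ε → ε ≤ 1 →
      Tendsto (fun k => ((φ0 k) (Icc (1 - ε) 1)).toReal) atTop (𝓝 1) := by
    intro ε hε hε1
    have hcpos : 0 < 𝒮.alphaLo / 2 := by have := hb.1; positivity
    set c := 𝒮.alphaLo / 2 with hcdef
    set L : ℕ → ℝ := fun k => 1 - (1 - μseq k) / (μseq k * c) with hLdef
    clear_value c L
    have hLle1 : ∀ k, L k ≤ 1 := by
      intro k
      have h0 := (hμ k).1
      have h1 := (hμ k).2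
      have : 0 ≤ (1 - μseq k) / (μseq k * c) :=
        div_nonneg (by linarith) (by positivity)
      simp only [hLdef]; linarith
    have hLlim : Tendsto L atTop (𝓝 1) := by
      rw [hLdef]
      have h1 : Tendsto (fun k => 1 - μseq k) atTop (𝓝 0) := by
        have := (tendsto_const_nhds (x := (1:ℝ)) (f := atTop)).sub hlim
        simpa using this
      have h2 : Tendsto (fun k => μseq k * c) atTop (𝓝 (1 * c)) :=
        hlim.mul tendsto_const_nhds
      have h3 : Tendsto (fun k => (1 - μseq k) / (μseq k * c)) atTop (𝓝 0) := by
        have := h1.div h2 (by simp [hcpos.ne'])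
        rw [zero_div] at this
        exact this
      have := (tendsto_const_nhds (x := (1:ℝ)) (f := atTop)).sub h3
      simpa using this
    -- key inequality
    have key : ∀ k, 0 < 2 * L k - 1 →
        2 * L k - 1 ≤ 1 - ε + ε * ((φ0 k) (Icc (1 - ε) 1)).toReal := by
      intro k hLk
      obtain hS := hSPE k
      haveI hP0 := hS.strat0.1
      haveI hP1 := hS.strat1.1
      set m := ((φ0 k) (Icc (1 - ε) 1)).toReal with hmdef
      set P := 𝒮.Pi0 (μseq k) (φ0 k) (φ1 k) (σ k) with hPdef
      clear_value m P
      -- lower bound on the equilibrium payoff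
      have hlow : 2 * L k - 1 ≤ P := by
        by_contra hcon
        push_neg at hcon
        set τ0 : ℝ := max 0 ((P + (2 * L k - 1)) / 2) with hτ0def
        have hτ0mem : τ0 ∈ Icc (0:ℝ) 1 := by
          constructor
          · exact le_max_left _ _
          · apply max_le (by norm_num)
            have := hLle1 k
            linarith
        have hτ0lt : τ0 < 2 * L k - 1 := by
          apply max_lt hLk
          linarith
        have hps : IsPriceStrategy (Measure.dirac τ0) :=
          ⟨by infer_instance, Measure.dirac_apply_of_mem hτ0mem⟩
        have hτ0lt' : τ0 < 2 * (1 - (1 - μseq k) / (μseq k * (𝒮.alphaLo / 2))) - 1 := by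
          have := hτ0lt
          simp only [hLdef, hcdef] at this
          exact this
        have heq := 𝒮.Pi0_dirac hb (hμ k) hS hτ0mem hτ0lt'
        have hle := hS.firm0opt (Measure.dirac τ0) hps
        rw [heq, ← hPdef] at hle
        have : (P + (2 * L k - 1)) / 2 ≤ τ0 := le_max_right _ _
        linarith
      -- upper bound on the equilibrium payoff
      have hup : P ≤ 1 - ε + ε * m := by
        set P2 := (φ0 k).prod (φ1 k) with hP2def
        haveI : IsProbabilityMeasure P2 := by rw [hP2def]; infer_instance
        set A : Set (ℝ × ℝ) := Icc (1 - ε) 1 ×ˢ (univ : Set ℝ) with hAdef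
        have hAmeas : MeasurableSet A := measurableSet_Icc.prod MeasurableSet.univ
        set g : ℝ × ℝ → ℝ := fun τ => (1 - ε) + A.indicator (fun _ => ε) τ with hgdef
        have hBmeas : MeasurableSet (Icc (0:ℝ) 1 ×ˢ (univ : Set ℝ)) :=
          measurableSet_Icc.prod MeasurableSet.univ
        have hAae : ∀ᵐ τ ∂P2, τ.1 ∈ Icc (0:ℝ) 1 := by
          rw [ae_iff]
          refine measure_mono_null ?_ ((prob_compl_eq_zero_iff hBmeas).mpr ?_)
          · intro τ hτ
            simp only [mem_setOf_eq] at hτ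
            simp only [mem_compl_iff, mem_prod, mem_univ, and_true]
            exact hτ
          · rw [Measure.prod_prod, hS.strat0.2, measure_univ, one_mul]
        have hg_int : Integrable g P2 :=
          (integrable_const _).add ((integrable_const ε).indicator hAmeas)
        have hgle : ∀ᵐ τ ∂P2,
            𝒮.actProb (μseq k) (σ k) τ.1 τ.2 CAction.buy0 * τ.1 ≤ g τ := by
          filter_upwards [hAae] with τ hτ
          have hact0 : 0 ≤ 𝒮.actProb (μseq k) (σ k) τ.1 τ.2 CAction.buy0 :=
            ENNReal.toReal_nonneg
          have hact1 := 𝒮.actProb_le_one (hμ k) (σ k) τ.1 τ.2 CAction.buy0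
          by_cases hmem : τ ∈ A
          · have h1 : 𝒮.actProb (μseq k) (σ k) τ.1 τ.2 CAction.buy0 * τ.1 ≤ 1 :=
              mul_le_one₀ hact1 hτ.1 hτ.2
            simp only [hgdef, indicator_of_mem hmem]
            linarith
          · have hτ1 : τ.1 < 1 - ε := by
              simp only [hAdef, mem_prod, mem_univ, and_true, mem_Icc, not_and_or,
                not_le] at hmem
              rcases hmem with h | h
              · exact h
              · exact absurd hτ.2 (not_le.mpr h)
            have h1 : 𝒮.actProb (μseq k) (σ k) τ.1 τ.2 CAction.buy0 * τ.1 ≤ τ.1 :=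
              mul_le_of_le_one_left hτ.1 hact1
            simp only [hgdef, indicator_of_notMem hmem]
            linarith
        have hint_g : ∫ τ, g τ ∂P2 = 1 - ε + ε * m := by
          simp only [hgdef]
          rw [integral_add (integrable_const _) ((integrable_const ε).indicator hAmeas)]
          rw [integral_const, integral_indicator_const _ hAmeas]
          rw [hAdef, hP2def, measureReal_def, measureReal_def, Measure.prod_prod]
          rw [measure_univ, measure_univ, mul_one, ← hmdef]
          simp only [ENNReal.toReal_one, smul_eq_mul, one_mul]
          ring
        by_cases hf : Integrable
            (fun τ : ℝ × ℝ => 𝒮.actProb (μseq k) (σ k) τ.1 τ.2 CAction.buy0 * τ.1) P2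
        · have h2 := integral_mono_ae hf hg_int hgle
          rw [hint_g] at h2
          rw [hPdef]
          exact h2
        · have hPz : P = 0 := by
            rw [hPdef]
            unfold SignalStructure.Pi0
            exact integral_undef hf
          have hgnn : 0 ≤ ∫ τ, g τ ∂P2 := by
            apply integral_nonneg
            intro τ
            simp only [hgdef]
            have : 0 ≤ A.indicator (fun _ => ε) τ :=
              indicator_nonneg (fun _ _ => le_of_lt hε) τ
            linarith
          rw [hint_g] at hgnn
          rw [hPz]
          exact hgnn
      linarith
    -- squeeze
    have hm_le_one : ∀ k, ((φ0 k) (Icc (1 - ε) 1)).toReal ≤ 1 := by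
      intro k
      haveI := (hSPE k).strat0.1
      exact ENNReal.toReal_mono ENNReal.one_ne_top (prob_le_one)
    have hEv : ∀ᶠ k in atTop, (3/4 : ℝ) < L k :=
      hLlim.eventually (eventually_gt_nhds (by norm_num))
    have hlow_ev : ∀ᶠ k in atTop,
        (2 * L k - 2) / ε + 1 ≤ ((φ0 k) (Icc (1 - ε) 1)).toReal := by
      filter_upwards [hEv] with k hk
      have hkey := key k (by linarith)
      rw [div_add' _ _ _ hε.ne', div_le_iff₀ hε]
      nlinarith
    have hlim1 : Tendsto (fun k => (2 * L k - 2) / ε + 1) atTop (𝓝 1) := by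
      have h1 : Tendsto (fun k => 2 * L k - 2) atTop (𝓝 0) := by
        have := (hLlim.const_mul 2).sub (tendsto_const_nhds (x := (2:ℝ)))
        simpa using this
      have h2 : Tendsto (fun k => (2 * L k - 2) / ε) atTop (𝓝 0) := by
        have := h1.div_const ε
        simpa using this
      have := h2.add (tendsto_const_nhds (x := (1:ℝ)))
      simpa using this
    exact tendsto_of_tendsto_of_tendsto_of_le_of_le' hlim1 tendsto_const_nhds
      hlow_ev (Eventually.of_forall hm_le_one)
  intro ε hε
  rcases le_or_gt ε 1 with h | h
  · exact main ε hε h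
  · have hsub : Icc (1 - (1:ℝ)) 1 ⊆ Icc (1 - ε) 1 :=
      Icc_subset_Icc (by linarith) le_rfl
    have hmono : ∀ k, ((φ0 k) (Icc (1 - (1:ℝ)) 1)).toReal
        ≤ ((φ0 k) (Icc (1 - ε) 1)).toReal := by
      intro k
      haveI := (hSPE k).strat0.1
      exact ENNReal.toReal_mono (measure_ne_top _ _) (measure_mono hsub)
    have hub : ∀ k, ((φ0 k) (Icc (1 - ε) 1)).toReal ≤ 1 := by
      intro k
      haveI := (hSPE k).strat0.1
      exact ENNReal.toReal_mono ENNReal.one_ne_top (prob_le_one)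
    exact tendsto_of_tendsto_of_tendsto_of_le_of_le
      (main 1 one_pos le_rfl) tendsto_const_nhds hmono hub
end
end
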